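/- arXiv:1209.0084 — 7 statements merged into one kernel-verified Lean document; each statement's English description precedes it below -/
import Mathlib

section
/- Let g ∈ ℕⁿ and let 0 ⪯ a ⪯ b ⪯ g in ℤⁿ. Set K[a,b] = 𝓑_b(R(−a)). Then 𝓟_g(K[a,b]) is isomorphic, as a multigraded K-vector space, to the direct sum ⊕_{c ∈ 𝓖[a,b]} K[Z_b](−c); in particular this direct sum is a Hilbert decomposition of 𝓟_g(K[a,b]). -/
/-!  `R = K[X₁,…,Xₙ]` with the `ℤⁿ`-grading.  For `0 ⪯ a ⪯ b ⪯ g` the multigraded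
vector space `K[a,b] = 𝓑_b(R(−a))` is one-dimensional exactly in the degrees of the
interval `[a,b]`, and its positive extension `𝓟_g(K[a,b])` has degree-`d` component
`K[a,b]_{g∧d}`.  The direct sum `⊕_{c ∈ 𝓖[a,b]} K[Z_b](−c)` has, in degree `d`, one
one-dimensional summand for every `c ∈ 𝓖[a,b]` with `c ⪯ d` and `d_j = c_j` for all
`X_j ∉ Z_b`.  The statement that `𝓟_g(K[a,b])` is isomorphic to this direct sum as a
multigraded `K`-vector space (i.e. that the latter is a Hilbert decomposition of the
former) is precisely the equality of the dimensions of the two graded components in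
every degree `d ∈ ℤⁿ`. -/

/-- `𝓖[a,b] = {c ∈ [a,b] : c_j = a_j for all j with b_j = g_j}`. -/
noncomputable def Gset {n : ℕ} (g a b : Fin n → ℤ) : Finset (Fin n → ℤ) :=
  (Finset.Icc a b).filter fun c => ∀ j, b j = g j → c j = a j

/-- `Z_b = {j : b_j = g_j}`. -/
def Zset {n : ℕ} (g b : Fin n → ℤ) : Finset (Fin n) :=
  Finset.univ.filter fun j => b j = g j

theorem positiveExtension_of_interval_isHilbertDecomposition
    {n : ℕ} (K : Type*) [Field K] (g a b : Fin n → ℤ)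
    (hg : (0 : Fin n → ℤ) ≤ g) (h0a : (0 : Fin n → ℤ) ≤ a)
    (hab : a ≤ b) (hbg : b ≤ g) :
    ∀ d : Fin n → ℤ,
      (((Gset g a b).filter fun c =>
          (∀ j, c j ≤ d j) ∧ ∀ j ∉ Zset g b, d j = c j).card)
        = if (∀ j, a j ≤ min (g j) (d j)) ∧ (∀ j, min (g j) (d j) ≤ b j)
          then 1 else 0 := by
  intro d
  classical
  have hmem : ∀ c : Fin n → ℤ,
      (c ∈ (Gset g a b).filter fun c =>
          (∀ j, c j ≤ d j) ∧ ∀ j ∉ Zset g b, d j = c j) ↔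
      ((∀ j, a j ≤ c j) ∧ (∀ j, c j ≤ b j) ∧ (∀ j, b j = g j → c j = a j)) ∧
        (∀ j, c j ≤ d j) ∧ (∀ j, ¬ b j = g j → d j = c j) := by
    intro c
    simp only [Gset, Zset, Finset.mem_filter, Finset.mem_Icc, Finset.mem_univ,
      true_and, Pi.le_def]
    tauto
  by_cases hP : (∀ j, a j ≤ min (g j) (d j)) ∧ (∀ j, min (g j) (d j) ≤ b j)
  · rw [if_pos hP]
    set c₀ : Fin n → ℤ := fun j => if b j = g j then a j else d j with hc₀
    have : ((Gset g a b).filter fun c =>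
        (∀ j, c j ≤ d j) ∧ ∀ j ∉ Zset g b, d j = c j) = {c₀} := by
      ext c
      rw [hmem, Finset.mem_singleton]
      constructor
      · rintro ⟨⟨_, _, hz⟩, _, hnz⟩
        funext j
        by_cases hj : b j = g j
        · simp [hc₀, hj, hz j hj]
        · simp [hc₀, hj, (hnz j hj).symm]
      · rintro rfl
        refine ⟨⟨fun j => ?_, fun j => ?_, fun j hj => by simp [hc₀, hj]⟩,
          fun j => ?_, fun j hj => by simp [hc₀, hj]⟩
        · by_cases hj : b j = g j
          · simp [hc₀, hj]
          · simp only [hc₀, hj, if_false]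
            exact le_trans (hP.1 j) (min_le_right _ _)
        · by_cases hj : b j = g j
          · simp only [hc₀, hj, if_true]
            exact hj ▸ hab j
          · simp only [hc₀, hj, if_false]
            have hlt : b j < g j := lt_of_le_of_ne (hbg j) hj
            have := hP.2 j
            rcases min_cases (g j) (d j) with ⟨he, _⟩ | ⟨he, _⟩
            · omega
            · omega
        · by_cases hj : b j = g j
          · simp only [hc₀, hj, if_true]
            exact le_trans (hP.1 j) (min_le_right _ _)
          · simp [hc₀, hj]
    rw [this, Finset.card_singleton]
  · rw [if_neg hP, Finset.card_eq_zero, Finset.eq_empty_iff_forall_notMem]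
    intro c hc
    rw [hmem] at hc
    obtain ⟨⟨hac, hcb, hz⟩, hcd, hnz⟩ := hc
    apply hP
    constructor
    · intro j
      exact le_min (le_trans (hac j) (le_trans (hcb j) (hbg j)))
        (le_trans (hac j) (hcd j))
    · intro j
      by_cases hj : b j = g j
      · rw [hj]; exact min_le_left _ _
      · have := hnz j hj
        have := hcb j
        exact le_trans (min_le_right _ _) (by omega)
end

section
/- Let M be a finitely generated ℤⁿ-graded R-module that is positively g-determined, and let 𝔓 : H_M(X)_{⪯g} = Σ_{i=1}^r Q[aⁱ,bⁱ](X) be a Hilbert partition of H_M(X)_{⪯g}. Then M ≅ ⊕_{i=1}^r ( ⊕_{c ∈ 𝓖[aⁱ,bⁱ]} K[Z_{bⁱ}](−c) ) as multigraded K-vector spaces; that is, the family (K[Z_{bⁱ}], c)_{1≤i≤r, c ∈ 𝓖[aⁱ,bⁱ]} is a Hilbert decomposition 𝔇(𝔓) of M. -/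
open MvPolynomial

/-!  Setting: `R = K[X₁,…,Xₙ]` with the `ℤⁿ`-grading `deg Xᵢ = eᵢ`.  A multigraded
`R`-module is a module `M` over `MvPolynomial (Fin n) K` together with a family
`gr : (Fin n → ℤ) → Submodule K M` of `K`-subspaces forming a direct sum
decomposition of `M` (the class `DirectSum.Decomposition gr`) which is compatible
with the `R`-action (`GradedSMul gr`). -/

variable {K : Type*} [Field K] {n : ℕ} {M : Type*} [AddCommGroup M] [Module K M]
  [Module (MvPolynomial (Fin n) K) M] [IsScalarTower K (MvPolynomial (Fin n) K) M]

/-- The grading is compatible with the `R`-module structure: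
multiplication by `Xᵢ` maps `M_a` into `M_{a+eᵢ}`. -/
def GradedSMul (gr : (Fin n → ℤ) → Submodule K M) : Prop :=
  ∀ (i : Fin n) (a : Fin n → ℤ), ∀ x ∈ gr a,
    (MvPolynomial.X i : MvPolynomial (Fin n) K) • x ∈ gr (a + Pi.single i 1)

/-- `M` is positively `g`-determined: `M_a = 0` unless `a ∈ ℕⁿ`, and the
multiplication map `·Xᵢ : M_a → M_{a+eᵢ}` is bijective whenever `aᵢ ≥ gᵢ`. -/
def PosDetermined (gr : (Fin n → ℤ) → Submodule K M) (g : Fin n → ℤ) : Prop :=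
  (∀ a : Fin n → ℤ, ¬ (0 : Fin n → ℤ) ≤ a → gr a = ⊥) ∧
  ∀ (i : Fin n) (a : Fin n → ℤ), g i ≤ a i →
    (∀ x ∈ gr a, (MvPolynomial.X i : MvPolynomial (Fin n) K) • x = 0 → x = 0) ∧
    (∀ y ∈ gr (a + Pi.single i 1), ∃ x ∈ gr a,
      (MvPolynomial.X i : MvPolynomial (Fin n) K) • x = y)

/-- A Hilbert partition `𝔓 : H_M(X)_{⪯g} = Σᵢ Q[aⁱ,bⁱ](X)`: the intervals satisfy
`0 ⪯ aⁱ ⪯ bⁱ ⪯ g` and, in each degree `0 ⪯ c ⪯ g`, the coefficient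
`dim_K M_c` of `H_M(X)_{⪯g}` equals the number of `i` with `aⁱ ⪯ c ⪯ bⁱ`. -/
def IsHilbertPartition (gr : (Fin n → ℤ) → Submodule K M) (g : Fin n → ℤ)
    {r : ℕ} (a b : Fin r → Fin n → ℤ) : Prop :=
  (∀ i, (0 : Fin n → ℤ) ≤ a i ∧ a i ≤ b i ∧ b i ≤ g) ∧
  ∀ c : Fin n → ℤ, (0 : Fin n → ℤ) ≤ c → c ≤ g →
    Module.rank K ↥(gr c) =
      (((Finset.univ : Finset (Fin r)).filter
        fun i => (∀ j, a i j ≤ c j) ∧ (∀ j, c j ≤ b i j)).card : Cardinal)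

/-- `ρ(b) = |Z_b|`. -/
def rho {n : ℕ} (g b : Fin n → ℤ) : ℕ := (Zset g b).card

/-- A Hilbert decomposition `M ≅ ⊕_{i∈I} K[Zᵢ](−sᵢ)` as multigraded `K`-vector
spaces: in each degree `c ∈ ℤⁿ`, `dim_K M_c` equals the number of indices `i`
with `sᵢ ⪯ c` and `c_j = (sᵢ)_j` for all `j ∉ Zᵢ`. -/
def IsHilbertDecomp (gr : (Fin n → ℤ) → Submodule K M)
    {ι : Type*} [Fintype ι] (Z : ι → Finset (Fin n)) (s : ι → Fin n → ℤ) : Prop :=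
  ∀ c : Fin n → ℤ, Module.rank K ↥(gr c) =
    (((Finset.univ : Finset ι).filter
      fun i => (∀ j, s i j ≤ c j) ∧ (∀ j, j ∉ Z i → c j = s i j)).card : Cardinal)


section Aux

variable {K : Type*} [Field K] {n : ℕ} {M : Type*} [AddCommGroup M] [Module K M]
  [Module (MvPolynomial (Fin n) K) M] [IsScalarTower K (MvPolynomial (Fin n) K) M]

lemma rank_step_aux (gr : (Fin n → ℤ) → Submodule K M) (hsmul : GradedSMul gr)
    (g : Fin n → ℤ) (hM : PosDetermined gr g) (i : Fin n) (c : Fin n → ℤ)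
    (hc : g i ≤ c i) :
    Module.rank K ↥(gr c) = Module.rank K ↥(gr (c + Pi.single i 1)) := by
  obtain ⟨hinj, hsurj⟩ := hM.2 i c hc
  let f : gr c →ₗ[K] gr (c + Pi.single i 1) :=
  { toFun := fun x => ⟨(X i : MvPolynomial (Fin n) K) • (x : M), hsmul i c x x.2⟩
    map_add' := fun x y => by ext; simp [smul_add]
    map_smul' := fun k x => by ext; simp [smul_comm k] }
  have hbij : Function.Bijective f := by
    constructor
    · intro x y hxy
      have h1 : (X i : MvPolynomial (Fin n) K) • (x : M) =
          (X i : MvPolynomial (Fin n) K) • (y : M) := congrArg Subtype.val hxy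
      have h2 : (X i : MvPolynomial (Fin n) K) • ((x : M) - y) = 0 := by
        rw [smul_sub, h1, sub_self]
      have := hinj _ (Submodule.sub_mem _ x.2 y.2) h2
      exact Subtype.ext (sub_eq_zero.mp this)
    · rintro ⟨y, hy⟩
      obtain ⟨x, hx, hxy⟩ := hsurj y hy
      exact ⟨⟨x, hx⟩, Subtype.ext hxy⟩
  exact (LinearEquiv.ofBijective f hbij).rank_eq

lemma rank_trunc_aux (gr : (Fin n → ℤ) → Submodule K M) (hsmul : GradedSMul gr)
    (g : Fin n → ℤ) (hg : (0 : Fin n → ℤ) ≤ g) (hM : PosDetermined gr g) :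
    ∀ (N : ℕ) (c : Fin n → ℤ), (0 : Fin n → ℤ) ≤ c →
      (∑ j, (c j - min (c j) (g j)).toNat) = N →
      Module.rank K ↥(gr c) = Module.rank K ↥(gr (fun j => min (c j) (g j))) := by
  intro N
  induction N with
  | zero =>
    intro c hc hsum
    have hall := (Finset.sum_eq_zero_iff).mp hsum
    have hceq : (fun j => min (c j) (g j)) = c := by
      funext j
      have := hall j (Finset.mem_univ j)
      have hle : min (c j) (g j) ≤ c j := min_le_left _ _
      omega
    rw [hceq]
  | succ N ih =>
    intro c hc hsum
    obtain ⟨i, -, hi⟩ := Finset.exists_ne_zero_of_sum_ne_zero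
      (by rw [hsum]; exact Nat.succ_ne_zero N)
    have hgc : g i < c i := by
      have : min (c i) (g i) ≤ g i := min_le_right _ _
      have : min (c i) (g i) ≤ c i := min_le_left _ _
      by_contra h
      push_neg at h
      have : min (c i) (g i) = c i := min_eq_left h
      omega
    set c' : Fin n → ℤ := Function.update c i (c i - 1) with hc'
    have hc'i : c' i = c i - 1 := by simp [hc']
    have hc'j : ∀ j, j ≠ i → c' j = c j := fun j hj => Function.update_of_ne hj _ _
    have hgc' : g i ≤ c' i := by rw [hc'i]; omega
    have hpos : (0 : Fin n → ℤ) ≤ c' := by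
      intro j
      show (0 : ℤ) ≤ c' j
      by_cases hj : j = i
      · rw [hj, hc'i]
        have h1 : (0 : ℤ) ≤ g i := hg i
        omega
      · rw [hc'j j hj]; exact hc j
    have hmin : ∀ j, min (c' j) (g j) = min (c j) (g j) := by
      intro j
      by_cases hj : j = i
      · subst hj; rw [hc'i]; omega
      · rw [hc'j j hj]
    have hsum' : (∑ j, (c' j - min (c' j) (g j)).toNat) = N := by
      have h1 : ∀ j, j ≠ i → (c' j - min (c' j) (g j)).toNat
          = (c j - min (c j) (g j)).toNat := by
        intro j hj; rw [hc'j j hj]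
      have h2 : (c' i - min (c' i) (g i)).toNat + 1
          = (c i - min (c i) (g i)).toNat := by
        rw [hc'i]; omega
      have e1 : (∑ j, (c j - min (c j) (g j)).toNat)
          = (c i - min (c i) (g i)).toNat
            + ∑ j ∈ Finset.univ.erase i, (c j - min (c j) (g j)).toNat :=
        (Finset.add_sum_erase _ _ (Finset.mem_univ i)).symm
      have e2 : (∑ j, (c' j - min (c' j) (g j)).toNat)
          = (c' i - min (c' i) (g i)).toNat
            + ∑ j ∈ Finset.univ.erase i, (c' j - min (c' j) (g j)).toNat :=
        (Finset.add_sum_erase _ _ (Finset.mem_univ i)).symm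
      have e3 : (∑ j ∈ Finset.univ.erase i, (c' j - min (c' j) (g j)).toNat)
          = ∑ j ∈ Finset.univ.erase i, (c j - min (c j) (g j)).toNat :=
        Finset.sum_congr rfl fun j hj => h1 j (Finset.ne_of_mem_erase hj)
      omega
    have hrec := ih c' hpos hsum'
    have hceq : c = c' + Pi.single i 1 := by
      funext j
      by_cases hj : j = i
      · subst hj; simp [hc'i]
      · simp [hc'j j hj, Pi.single_apply, hj]
    have hstep := rank_step_aux gr hsmul g hM i c' hgc'
    have hfun : (fun j => min (c j) (g j)) = fun j => min (c' j) (g j) :=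
      funext fun j => (hmin j).symm
    rw [hfun, ← hrec, hceq]
    exact hstep.symm

end Aux

/-- **Theorem (part 1).**  If `M` is a finitely generated multigraded `R`-module
which is positively `g`-determined and `𝔓 : H_M(X)_{⪯g} = Σ_{i=1}^r Q[aⁱ,bⁱ](X)` is
a Hilbert partition, then the family `(K[Z_{bⁱ}], c)` indexed by the pairs
`(i, c)` with `1 ≤ i ≤ r`, `c ∈ 𝓖[aⁱ,bⁱ]`, is a Hilbert decomposition
`𝔇(𝔓) : M ≅ ⊕ᵢ ⊕_{c ∈ 𝓖[aⁱ,bⁱ]} K[Z_{bⁱ}](−c)` of `M`. -/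
theorem hilbertPartition_induces_hilbertDecomposition
    (gr : (Fin n → ℤ) → Submodule K M) [DirectSum.Decomposition gr]
    (hsmul : GradedSMul gr) [Module.Finite (MvPolynomial (Fin n) K) M]
    (g : Fin n → ℤ) (hg : (0 : Fin n → ℤ) ≤ g)
    (hM : PosDetermined gr g)
    {r : ℕ} (a b : Fin r → Fin n → ℤ)
    (hP : IsHilbertPartition gr g a b) :
    IsHilbertDecomp gr
      (fun p : Σ i : Fin r, {w // w ∈ Gset g (a i) (b i)} => Zset g (b p.1))
      (fun p => (p.2 : Fin n → ℤ)) := by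
  intro c
  by_cases hc : (0 : Fin n → ℤ) ≤ c
  · set cb : Fin n → ℤ := fun j => min (c j) (g j) with hcb
    have h0 : (0 : Fin n → ℤ) ≤ cb := fun j => le_min (hc j) (hg j)
    have h1 : cb ≤ g := fun j => min_le_right _ _
    have hrank : Module.rank K ↥(gr c) = Module.rank K ↥(gr cb) :=
      rank_trunc_aux gr hsmul g hg hM _ c hc rfl
    rw [hrank, hP.2 cb h0 h1]
    norm_cast
    -- For each admissible interval index `i`, the unique witness `w`.
    have key : ∀ i : Fin r, ((∀ j, a i j ≤ cb j) ∧ (∀ j, cb j ≤ b i j)) →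
        ((∀ j, a i j ≤ c j) ∧ (∀ j, b i j ≠ g j → c j ≤ b i j)) := by
      intro i ⟨hA, hB⟩
      constructor
      · intro j
        exact le_trans (hA j) (min_le_left _ _)
      · intro j hbg
        have h2 : min (c j) (g j) ≤ b i j := hB j
        have h3 : b i j ≤ g j := (hP.1 i).2.2 j
        omega
    refine Finset.card_bij'
      (fun i hi => (⟨i, ⟨fun j => if b i j = g j then a i j else c j, by
        have hi' := Finset.mem_filter.mp hi
        obtain ⟨h1, h2⟩ := key i hi'.2
        refine Finset.mem_filter.mpr ⟨Finset.mem_Icc.mpr ⟨?_, ?_⟩, ?_⟩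
        · intro j
          by_cases hbg : b i j = g j
          · simp [hbg]
          · simpa [hbg] using h1 j
        · intro j
          by_cases hbg : b i j = g j
          · simpa [hbg] using (hP.1 i).2.1 j
          · simpa [hbg] using h2 j hbg
        · intro j hbg
          simp [hbg]⟩⟩ :
        Σ i : Fin r, {w // w ∈ Gset g (a i) (b i)}))
      (fun p _ => p.1) ?_ ?_ ?_ ?_
    · -- maps into the decomposition filter
      intro i hi
      have hi' := Finset.mem_filter.mp hi
      obtain ⟨h1, h2⟩ := key i hi'.2
      refine Finset.mem_filter.mpr ⟨Finset.mem_univ _, ?_, ?_⟩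
      · intro j
        by_cases hbg : b i j = g j <;> simp [hbg, h1 j]
      · intro j hj
        have hbg : ¬ b i j = g j := by
          intro h
          exact hj (Finset.mem_filter.mpr ⟨Finset.mem_univ _, h⟩)
        simp [hbg]
    · -- reverse direction
      rintro ⟨i, w, hw⟩ hp
      obtain ⟨-, hle, hout⟩ := Finset.mem_filter.mp hp
      obtain ⟨hicc, hZ⟩ := Finset.mem_filter.mp hw
      obtain ⟨haw, hwb⟩ := Finset.mem_Icc.mp hicc
      refine Finset.mem_filter.mpr ⟨Finset.mem_univ _, ?_, ?_⟩
      · intro j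
        refine le_min (le_trans (haw j) (hle j)) ?_
        exact le_trans ((hP.1 i).2.1 j) ((hP.1 i).2.2 j)
      · intro j
        by_cases hbg : b i j = g j
        · rw [hbg]
          exact min_le_right _ _
        · have hcw : c j = w j := hout j (by
            intro h
            exact hbg (Finset.mem_filter.mp h).2)
          have hwbj : (w : Fin n → ℤ) j ≤ b i j := hwb j
          show min (c j) (g j) ≤ b i j
          omega
    · intro i hi
      rfl
    · rintro ⟨i, w, hw⟩ hp
      obtain ⟨-, hle, hout⟩ := Finset.mem_filter.mp hp
      obtain ⟨hicc, hZ⟩ := Finset.mem_filter.mp hw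
      refine Sigma.ext rfl (heq_of_eq ?_)
      refine Subtype.ext (funext fun j => ?_)
      by_cases hbg : b i j = g j
      · simp [hbg, (hZ j hbg).symm]
      · have hcw : c j = w j := hout j (by
          intro h
          exact hbg (Finset.mem_filter.mp h).2)
        simp [hbg, hcw]
  · have hbot : gr c = ⊥ := hM.1 c hc
    have hzero : Module.rank K ↥(gr c) = 0 := by rw [hbot]; exact rank_bot K M
    rw [hzero]
    have : ((Finset.univ : Finset (Σ i : Fin r, {w // w ∈ Gset g (a i) (b i)})).filter
        fun p => (∀ j, (p.2 : Fin n → ℤ) j ≤ c j) ∧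
          (∀ j, j ∉ Zset g (b p.1) → c j = (p.2 : Fin n → ℤ) j)).card = 0 := by
      rw [Finset.card_eq_zero, Finset.filter_eq_empty_iff]
      rintro ⟨i, w, hw⟩ _
      rintro ⟨hle, -⟩
      apply hc
      intro j
      have hmem := (Finset.mem_filter.mp hw).1
      have haw : a i ≤ (w : Fin n → ℤ) := (Finset.mem_Icc.mp hmem).1
      exact le_trans (le_trans ((hP.1 i).1 j) (haw j)) (hle j)
    rw [this]
    simp
end

section
/- Let M be a finitely generated ℤⁿ-graded R-module that is positively g-determined, and let 𝔇 be any Hilbert decomposition of M. Then there exists a Hilbert partition 𝔓 of H_M(X)_{⪯g} whose induced Hilbert decomposition 𝔇(𝔓) satisfies depth 𝔇(𝔓) ≥ depth 𝔇. -/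
open MvPolynomial

/-!  Setting: `R = K[X₁,…,Xₙ]` with the `ℤⁿ`-grading `deg Xᵢ = eᵢ`.  A multigraded
`R`-module is a module `M` over `MvPolynomial (Fin n) K` together with a family
`gr : (Fin n → ℤ) → Submodule K M` of `K`-subspaces forming a direct sum
decomposition of `M` (the class `DirectSum.Decomposition gr`) which is compatible
with the `R`-action (`GradedSMul gr`). -/

variable {K : Type*} [Field K] {n : ℕ} {M : Type*} [AddCommGroup M] [Module K M]
  [Module (MvPolynomial (Fin n) K) M] [IsScalarTower K (MvPolynomial (Fin n) K) M]

lemma rank_step (gr : (Fin n → ℤ) → Submodule K M) (hsmul : GradedSMul gr)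
    (g : Fin n → ℤ) (hM : PosDetermined gr g) (i : Fin n) (a : Fin n → ℤ)
    (ha : g i ≤ a i) :
    Module.rank K ↥(gr a) = Module.rank K ↥(gr (a + Pi.single i 1)) := by
  obtain ⟨hinj, hsurj⟩ := hM.2 i a ha
  let f : ↥(gr a) →ₗ[K] ↥(gr (a + Pi.single i 1)) :=
    { toFun := fun x => ⟨(X i : MvPolynomial (Fin n) K) • (x : M), hsmul i a x x.2⟩
      map_add' := by
        intro x y; ext
        show (X i : MvPolynomial (Fin n) K) • ((x : M) + y) = _
        rw [smul_add]; rfl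
      map_smul' := by
        intro k x; ext
        show (X i : MvPolynomial (Fin n) K) • ((k • x : ↥(gr a)) : M) = k • _
        rw [Submodule.coe_smul]
        exact (smul_comm k ((X i : MvPolynomial (Fin n) K)) (x : M)).symm }
  have hb : Function.Bijective f := by
    constructor
    · intro x y hxy
      have h1 : (X i : MvPolynomial (Fin n) K) • ((x : M) - y) = 0 := by
        have := congrArg Subtype.val hxy
        simp only [f, LinearMap.coe_mk, AddHom.coe_mk] at this
        rw [smul_sub, this, sub_self]
      have h2 : (x : M) - y ∈ gr a := sub_mem x.2 y.2
      exact Subtype.ext (sub_eq_zero.mp (hinj _ h2 h1))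
    · intro y
      obtain ⟨x, hx, hxy⟩ := hsurj y y.2
      exact ⟨⟨x, hx⟩, Subtype.ext hxy⟩
  exact (LinearEquiv.ofBijective f hb).rank_eq

lemma rank_trunc (gr : (Fin n → ℤ) → Submodule K M) (hsmul : GradedSMul gr)
    (g : Fin n → ℤ) (hg : (0 : Fin n → ℤ) ≤ g) (hM : PosDetermined gr g) :
    ∀ (m : ℕ) (a : Fin n → ℤ), (0 : Fin n → ℤ) ≤ a →
      (∑ j, (a j - g j).toNat) = m →
      Module.rank K ↥(gr a) = Module.rank K ↥(gr (a ⊓ g)) := by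
  intro m
  induction m with
  | zero =>
    intro a _ hsum
    have hle : a ≤ g := by
      intro j
      have := Finset.sum_eq_zero_iff.mp hsum j (Finset.mem_univ j)
      show a j ≤ g j
      omega
    rw [inf_eq_left.mpr hle]
  | succ m ih =>
    intro a ha hsum
    have hex : ∃ j, g j < a j := by
      by_contra h
      push_neg at h
      have : (∑ j, (a j - g j).toNat) = 0 :=
        Finset.sum_eq_zero fun j _ => by have := h j; omega
      omega
    obtain ⟨j, hj⟩ := hex
    set a' : Fin n → ℤ := a - Pi.single j 1 with ha'def
    have ha'j : a' j = a j - 1 := by simp [ha'def]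
    have ha'ne : ∀ j' ≠ j, a' j' = a j' := by
      intro j' hj'
      simp [ha'def, Pi.single_eq_of_ne hj']
    have key : a' + Pi.single j 1 = a := by
      simp [ha'def]
    have h1 : Module.rank K ↥(gr a') = Module.rank K ↥(gr a) := by
      have := rank_step gr hsmul g hM j a' (by omega)
      rwa [key] at this
    have ha'0 : (0 : Fin n → ℤ) ≤ a' := by
      intro j'
      show (0 : ℤ) ≤ a' j'
      rcases eq_or_ne j' j with rfl | hne
      · have := hg j'; have : (0:ℤ) ≤ g j' := hg j'; omega
      · rw [ha'ne j' hne]; exact ha j'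
    have hsum' : (∑ j', (a' j' - g j').toNat) = m := by
      have e1 : ∑ j', (a' j' - g j').toNat
          = ∑ j' ∈ Finset.univ.erase j, (a' j' - g j').toNat + (a' j - g j).toNat := by
        rw [Finset.sum_erase_add _ _ (Finset.mem_univ j)]
      have e2 : ∑ j', (a j' - g j').toNat
          = ∑ j' ∈ Finset.univ.erase j, (a j' - g j').toNat + (a j - g j).toNat := by
        rw [Finset.sum_erase_add _ _ (Finset.mem_univ j)]
      have e3 : ∑ j' ∈ Finset.univ.erase j, (a' j' - g j').toNat
          = ∑ j' ∈ Finset.univ.erase j, (a j' - g j').toNat := by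
        refine Finset.sum_congr rfl fun j' hj' => ?_
        rw [ha'ne j' (Finset.ne_of_mem_erase hj')]
      omega
    have hinf : a' ⊓ g = a ⊓ g := by
      funext j'
      rcases eq_or_ne j' j with rfl | hne
      · simp only [Pi.inf_apply, ha'j]
        rw [min_def, min_def]
        split_ifs <;> omega
      · simp only [Pi.inf_apply, ha'ne j' hne]
    rw [← h1, ← hinf]
    exact ih a' ha'0 hsum'

/-- **Theorem (part 2).**  If `M` is a finitely generated multigraded `R`-module
which is positively `g`-determined and `𝔇 : M ≅ ⊕_{i∈I} K[Zᵢ](−sᵢ)` is any Hilbert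
decomposition of `M`, then there is a Hilbert partition `𝔓` of `H_M(X)_{⪯g}` whose
induced Hilbert decomposition `𝔇(𝔓)` has depth `min_i ρ(bⁱ)` at least the depth
`min_i |Zᵢ|` of `𝔇`. -/
theorem exists_hilbertPartition_depth_ge
    (gr : (Fin n → ℤ) → Submodule K M) [DirectSum.Decomposition gr]
    (hsmul : GradedSMul gr) [Module.Finite (MvPolynomial (Fin n) K) M]
    (g : Fin n → ℤ) (hg : (0 : Fin n → ℤ) ≤ g)
    (hM : PosDetermined gr g)
    {ι : Type*} [Fintype ι] [Nonempty ι]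
    (Z : ι → Finset (Fin n)) (s : ι → Fin n → ℤ)
    (hD : IsHilbertDecomp gr Z s) :
    ∃ (r : ℕ) (a b : Fin r → Fin n → ℤ),
      IsHilbertPartition gr g a b ∧
        sInf {d | ∃ i : ι, d = (Z i).card} ≤ sInf {d | ∃ i : Fin r, d = rho g (b i)} := by
  classical
  -- every shift has a nonzero graded piece
  have hrank : ∀ i : ι, Module.rank K ↥(gr (s i)) ≠ 0 := by
    intro i h
    rw [hD (s i)] at h
    have hi : i ∈ (Finset.univ : Finset ι).filter
        (fun i' => (∀ j, s i' j ≤ s i j) ∧ (∀ j, j ∉ Z i' → s i j = s i' j)) := by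
      simp
    exact Finset.card_ne_zero_of_mem hi (Nat.cast_eq_zero.mp h)
  have hs0 : ∀ i : ι, (0 : Fin n → ℤ) ≤ s i := by
    intro i
    by_contra h
    exact hrank i (by rw [hM.1 _ h]; exact rank_bot K M)
  -- the set of indices with s i ≤ g is nonempty
  set I' : Finset ι := Finset.univ.filter (fun i => s i ≤ g) with hI'
  have hI'ne : I'.Nonempty := by
    obtain ⟨i₀⟩ := (inferInstance : Nonempty ι)
    set c : Fin n → ℤ := s i₀ ⊓ g with hc
    have hc0 : (0 : Fin n → ℤ) ≤ c := le_inf (hs0 i₀) hg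
    have hcr : Module.rank K ↥(gr c) ≠ 0 := by
      rw [← rank_trunc gr hsmul g hg hM _ (s i₀) (hs0 i₀) rfl]
      exact hrank i₀
    rw [hD c] at hcr
    have : ((Finset.univ : Finset ι).filter
        (fun i => (∀ j, s i j ≤ c j) ∧ (∀ j, j ∉ Z i → c j = s i j))).Nonempty := by
      rw [Finset.nonempty_iff_ne_empty]
      intro h
      exact hcr (by rw [h]; simp)
    obtain ⟨i', hi'⟩ := this
    rw [Finset.mem_filter] at hi'
    refine ⟨i', Finset.mem_filter.mpr ⟨Finset.mem_univ _, fun j => ?_⟩⟩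
    exact le_trans (hi'.2.1 j) (inf_le_right (a := s i₀ j))
  -- set up the partition
  set r : ℕ := I'.card with hr
  set φ : Fin r → ι := fun k => ((I'.equivFin.symm k : I') : ι) with hφ
  have hφI' : ∀ k, φ k ∈ I' := fun k => (I'.equivFin.symm k).2
  have hφg : ∀ k, s (φ k) ≤ g := fun k => (Finset.mem_filter.mp (hφI' k)).2
  have hφinj : Function.Injective φ :=
    Subtype.val_injective.comp I'.equivFin.symm.injective
  refine ⟨r, fun k => s (φ k),
    fun k => fun j => if j ∈ Z (φ k) then g j else s (φ k) j, ⟨?_, ?_⟩, ?_⟩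
  · intro k
    refine ⟨hs0 _, fun j => ?_, fun j => ?_⟩
    · show s (φ k) j ≤ (if j ∈ Z (φ k) then g j else s (φ k) j)
      split_ifs with h
      · exact hφg k j
      · exact le_rfl
    · show (if j ∈ Z (φ k) then g j else s (φ k) j) ≤ g j
      split_ifs with h
      · exact le_rfl
      · exact hφg k j
  · intro c hc0 hcg
    rw [hD c]
    norm_cast
    refine (Finset.card_nbij φ ?_ (hφinj.injOn) ?_).symm
    · intro k hk
      simp only [Finset.coe_filter, Finset.mem_filter, Finset.mem_univ, true_and, Set.mem_setOf_eq] at hk ⊢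
      refine ⟨hk.1, fun j hj => ?_⟩
      have h2 := hk.2 j
      rw [if_neg hj] at h2
      exact le_antisymm h2 (hk.1 j)
    · intro i hi
      simp only [Finset.coe_filter, Finset.mem_univ, true_and, Set.mem_setOf_eq] at hi
      have hiI' : i ∈ I' := Finset.mem_filter.mpr
        ⟨Finset.mem_univ _, fun j => le_trans (hi.1 j) (hcg j)⟩
      have hφk : φ (I'.equivFin ⟨i, hiI'⟩) = i := by
        simp [hφ]
      refine ⟨I'.equivFin ⟨i, hiI'⟩, ?_, hφk⟩
      simp only [Finset.coe_filter, Finset.mem_univ, true_and, Set.mem_setOf_eq, hφk]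
      refine ⟨hi.1, fun j => ?_⟩
      split_ifs with h
      · exact hcg j
      · exact le_of_eq (hi.2 j h)
  · have hrpos : 0 < r := Finset.card_pos.mpr hI'ne
    refine le_csInf ⟨rho g (fun j => if j ∈ Z (φ ⟨0, hrpos⟩) then g j
      else s (φ ⟨0, hrpos⟩) j), ⟨⟨0, hrpos⟩, rfl⟩⟩ ?_
    rintro d ⟨k, rfl⟩
    have h1 : sInf {d | ∃ i : ι, d = (Z i).card} ≤ (Z (φ k)).card :=
      Nat.sInf_le ⟨φ k, rfl⟩
    refine le_trans h1 (Finset.card_le_card ?_)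
    intro j hj
    rw [Zset, Finset.mem_filter]
    exact ⟨Finset.mem_univ _, if_pos hj⟩
end

section
/- Let M be a finitely generated ℤⁿ-graded R-module that is positively g-determined, let 𝔓 be a Hilbert partition of H_M(X)_{⪯g} with induced Hilbert decomposition 𝔇(𝔓) : M ≅ ⊕_{i∈I} Rᵢ(−sᵢ) (I finite, sᵢ ⪯ g), and for each i ∈ I choose 0 ≠ mᵢ ∈ M_{sᵢ}. Then the following are equivalent: (1) M = ⊕_{i∈I} mᵢRᵢ is a Stanley decomposition of M; (2) for all i ∈ I one has Rᵢ ∩ Ann(mᵢ) = 0, and whenever Σ_{i∈I} mᵢ (Σ_{sᵢ + t_{i_j} ⪯ g} α_{i_j} X^{t_{i_j}}) = 0 with α_{i_j} ∈ K and X^{t_{i_j}} ∈ Rᵢ, all coefficients α_{i_j} vanish. -/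
set_option linter.unusedSectionVars false
set_option maxHeartbeats 1000000


open MvPolynomial

/-!  Setting: `R = K[X₁,…,Xₙ]` with the `ℤⁿ`-grading `deg Xᵢ = eᵢ`.  A multigraded
`R`-module is a module `M` over `MvPolynomial (Fin n) K` together with a family
`gr : (Fin n → ℤ) → Submodule K M` of `K`-subspaces forming a direct sum
decomposition of `M` (the class `DirectSum.Decomposition gr`) which is compatible
with the `R`-action (`GradedSMul gr`). -/

variable {K : Type*} [Field K] {n : ℕ} {M : Type*} [AddCommGroup M] [Module K M]
  [Module (MvPolynomial (Fin n) K) M] [IsScalarTower K (MvPolynomial (Fin n) K) M]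

/-- The multigraded `K`-vector subspace `x·K[Z] ⊆ M`. -/
def stanleySpace (K : Type*) [Field K] {n : ℕ} {M : Type*} [AddCommGroup M]
    [Module K M] [Module (MvPolynomial (Fin n) K) M]
    (x : M) (Z : Finset (Fin n)) : Submodule K M :=
  Submodule.span K
    ((fun t : Fin n →₀ ℕ => (MvPolynomial.monomial t (1 : K)) • x) ''
      {t : Fin n →₀ ℕ | ∀ j ∉ Z, t j = 0})

/-- A Stanley decomposition `M = ⊕_{i∈I} mᵢK[Zᵢ]` of `M`: the `mᵢ` are homogeneous
of degree `sᵢ`, `K[Zᵢ] ∩ Ann(mᵢ) = 0`, and `M` is the direct sum of the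
multigraded subspaces `mᵢK[Zᵢ]`. -/
def IsStanleyDecomp (gr : (Fin n → ℤ) → Submodule K M)
    {ι : Type*} [Fintype ι] (Z : ι → Finset (Fin n)) (s : ι → Fin n → ℤ)
    (m : ι → M) : Prop :=
  (∀ i, m i ∈ gr (s i)) ∧
  (∀ i, ∀ q ∈ MvPolynomial.supported K (↑(Z i) : Set (Fin n)), q • m i = 0 → q = 0) ∧
  (iSupIndep fun i => stanleySpace K (m i) (Z i)) ∧
  (⨆ i, stanleySpace K (m i) (Z i)) = ⊤

/-! ### Auxiliary machinery -/

section Aux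

/-- Integer-valued degree of an exponent vector. -/
def auxDeg {n : ℕ} (t : Fin n →₀ ℕ) : Fin n → ℤ := fun j => (t j : ℤ)

/-- The canonical exponent vector `c - s` (truncated at `0`). -/
noncomputable def auxT {n : ℕ} (s c : Fin n → ℤ) : Fin n →₀ ℕ :=
  Finsupp.equivFunOnFinite.symm fun j => (c j - s j).toNat

@[simp] lemma auxT_apply {n : ℕ} (s c : Fin n → ℤ) (j : Fin n) :
    auxT s c j = (c j - s j).toNat := rfl

/-- The set of indices "admissible" in degree `c`. -/
def auxAdm {n : ℕ} {ι : Type*} [Fintype ι] (Z : ι → Finset (Fin n))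
    (s : ι → Fin n → ℤ) (c : Fin n → ℤ) : Finset ι :=
  Finset.univ.filter fun p => (∀ j, s p j ≤ c j) ∧ (∀ j, j ∉ Z p → c j = s p j)

lemma mem_auxAdm {n : ℕ} {ι : Type*} [Fintype ι] {Z : ι → Finset (Fin n)}
    {s : ι → Fin n → ℤ} {c : Fin n → ℤ} {p : ι} :
    p ∈ auxAdm Z s c ↔ (∀ j, s p j ≤ c j) ∧ (∀ j, j ∉ Z p → c j = s p j) := by
  simp [auxAdm]

lemma aux_smul_comm (q : MvPolynomial (Fin n) K) (α : K) (v : M) :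
    q • (α • v) = α • (q • v) := by
  rw [← algebraMap_smul (MvPolynomial (Fin n) K) α v,
      ← algebraMap_smul (MvPolynomial (Fin n) K) α (q • v),
      ← mul_smul, ← mul_smul, mul_comm]

lemma aux_monomial_smul_eq (t : Fin n →₀ ℕ) (α : K) (v : M) :
    (MvPolynomial.monomial t α : MvPolynomial (Fin n) K) • v
      = α • ((MvPolynomial.monomial t (1 : K)) • v) := by
  have h : (MvPolynomial.monomial t α : MvPolynomial (Fin n) K)
      = α • MvPolynomial.monomial t (1 : K) := by
    rw [MvPolynomial.smul_monomial, smul_eq_mul, mul_one]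
  rw [h, smul_assoc]

lemma aux_X_mul_monomial (j : Fin n) (t : Fin n →₀ ℕ) :
    (MvPolynomial.X j : MvPolynomial (Fin n) K) * MvPolynomial.monomial t 1
      = MvPolynomial.monomial (t + Finsupp.single j 1) (1 : K) := by
  rw [MvPolynomial.X, MvPolynomial.monomial_mul, one_mul, add_comm]

lemma aux_mono_smul_mem {gr : (Fin n → ℤ) → Submodule K M} (hsmul : GradedSMul gr) :
    ∀ (N : ℕ) (t : Fin n →₀ ℕ), (∑ j, t j) = N → ∀ (c : Fin n → ℤ), ∀ x ∈ gr c,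
      (MvPolynomial.monomial t (1 : K) : MvPolynomial (Fin n) K) • x ∈ gr (c + auxDeg t) := by
  intro N
  induction N with
  | zero =>
    intro t ht c x hx
    have ht0 : t = 0 := by
      ext j
      exact (Finset.sum_eq_zero_iff.mp ht) j (Finset.mem_univ j)
    subst ht0
    have hdeg : c + auxDeg (0 : Fin n →₀ ℕ) = c := by
      funext j; simp [auxDeg]
    rw [hdeg]
    simpa [MvPolynomial.monomial_zero'] using hx
  | succ N ih =>
    intro t ht c x hx
    have hne : t ≠ 0 := by
      rintro rfl; simp at ht
    obtain ⟨j, hj⟩ : ∃ j, t j ≠ 0 := by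
      by_contra h
      push_neg at h
      exact hne (by ext j; exact h j)
    set t' : Fin n →₀ ℕ := t - Finsupp.single j 1 with ht'
    have htt' : t = t' + Finsupp.single j 1 := by
      ext k
      rw [Finsupp.add_apply, ht', Finsupp.tsub_apply]
      rcases eq_or_ne k j with rfl | hkj
      · rw [Finsupp.single_eq_same]; omega
      · rw [Finsupp.single_eq_of_ne' (Ne.symm hkj)]; omega
    have hsum' : (∑ k, t' k) = N := by
      have h1 : (∑ k, t k) = (∑ k, t' k) + 1 := by
        conv_lhs => rw [htt']
        simp only [Finsupp.add_apply]
        rw [Finset.sum_add_distrib]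
        congr 1
        simp [Finsupp.single_apply]
      omega
    have hmem : (MvPolynomial.X j : MvPolynomial (Fin n) K) • x ∈ gr (c + Pi.single j 1) :=
      hsmul j c x hx
    have := ih t' hsum' (c + Pi.single j 1) _ hmem
    have hdeg : c + Pi.single j 1 + auxDeg t' = c + auxDeg t := by
      funext k
      have h2 : t k = t' k + (Finsupp.single j 1 : Fin n →₀ ℕ) k := by rw [htt']; simp
      simp only [Pi.add_apply, auxDeg]
      rcases eq_or_ne k j with rfl | hkj
      · rw [Pi.single_eq_same]; rw [Finsupp.single_eq_same] at h2; omega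
      · rw [Pi.single_eq_of_ne hkj]; rw [Finsupp.single_eq_of_ne' (Ne.symm hkj)] at h2; omega
    rw [hdeg] at this
    have heq : (MvPolynomial.monomial t (1 : K) : MvPolynomial (Fin n) K) • x
        = (MvPolynomial.monomial t' (1 : K) : MvPolynomial (Fin n) K) •
            ((MvPolynomial.X j : MvPolynomial (Fin n) K) • x) := by
      rw [← mul_smul]
      rw [htt', mul_comm, aux_X_mul_monomial]
    rw [heq]
    exact this

lemma aux_supported_exponent {Z : Finset (Fin n)} {q : MvPolynomial (Fin n) K}
    (hq : q ∈ MvPolynomial.supported K (↑Z : Set (Fin n))) :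
    ∀ t ∈ q.support, ∀ j ∉ Z, t j = 0 := by
  intro t ht j hj
  by_contra h
  have hjv : j ∈ q.vars := (MvPolynomial.mem_vars j).mpr ⟨t, ht, Finsupp.mem_support_iff.mpr h⟩
  exact hj (MvPolynomial.mem_supported.mp hq hjv)

lemma aux_monomial_mem_supported {Z : Finset (Fin n)} {t : Fin n →₀ ℕ} (α : K)
    (h : ∀ j ∉ Z, t j = 0) :
    (MvPolynomial.monomial t α : MvPolynomial (Fin n) K) ∈
      MvPolynomial.supported K (↑Z : Set (Fin n)) := by
  rcases eq_or_ne α 0 with rfl | hα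
  · rw [map_zero]; exact zero_mem _
  · rw [MvPolynomial.mem_supported, MvPolynomial.vars_monomial hα]
    intro j hj
    simp only [Finset.mem_coe, Finsupp.mem_support_iff] at hj
    by_contra hjZ
    exact hj (h j hjZ)

lemma aux_smul_mem_stanley {Z : Finset (Fin n)} {q : MvPolynomial (Fin n) K}
    (hq : q ∈ MvPolynomial.supported K (↑Z : Set (Fin n))) (x : M) :
    q • x ∈ stanleySpace K x Z := by
  rw [show q • x = ∑ t ∈ q.support, (MvPolynomial.monomial t (q.coeff t)) • x from by
    rw [← Finset.sum_smul, ← q.as_sum]]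
  refine Submodule.sum_mem _ fun t ht => ?_
  rw [aux_monomial_smul_eq]
  exact Submodule.smul_mem _ _ (Submodule.subset_span
    ⟨t, fun j hj => aux_supported_exponent hq t ht j hj, rfl⟩)

lemma aux_stanley_elem {Z : Finset (Fin n)} {x y : M}
    (hy : y ∈ stanleySpace K x Z) :
    ∃ q ∈ MvPolynomial.supported K (↑Z : Set (Fin n)), q • x = y := by
  induction hy using Submodule.span_induction with
  | mem y hy =>
      obtain ⟨t, ht, rfl⟩ := hy
      exact ⟨MvPolynomial.monomial t 1, aux_monomial_mem_supported 1 ht, rfl⟩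
  | zero => exact ⟨0, zero_mem _, by rw [zero_smul]⟩
  | add y z _ _ hy hz =>
      obtain ⟨qy, hqy, rfl⟩ := hy
      obtain ⟨qz, hqz, rfl⟩ := hz
      exact ⟨qy + qz, add_mem hqy hqz, by rw [add_smul]⟩
  | smul α y _ hy =>
      obtain ⟨q, hq, rfl⟩ := hy
      exact ⟨α • q, Subalgebra.smul_mem _ hq α, by rw [smul_assoc]⟩

lemma aux_adm_step {ι : Type*} [Fintype ι] (g : Fin n → ℤ) (Z : ι → Finset (Fin n))
    (s : ι → Fin n → ℤ) (hsg : ∀ p j, s p j ≤ g j) (hZlt : ∀ p j, j ∉ Z p → s p j < g j)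
    (c : Fin n → ℤ) (j : Fin n) (hj : g j + 1 ≤ c j) :
    auxAdm Z s c = auxAdm Z s (c - Pi.single j 1) := by
  ext p
  simp only [mem_auxAdm, Pi.sub_apply]
  constructor
  · rintro ⟨h1, h2⟩
    refine ⟨fun k => ?_, fun k hk => ?_⟩
    · rcases eq_or_ne k j with rfl | hkj
      · rw [Pi.single_eq_same]; have := hsg p k; omega
      · rw [Pi.single_eq_of_ne hkj]; have := h1 k; omega
    · rcases eq_or_ne k j with rfl | hkj
      · exact absurd (h2 k hk) (by have := hZlt p k hk; omega)
      · rw [Pi.single_eq_of_ne hkj]; have := h2 k hk; omega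
  · rintro ⟨h1, h2⟩
    refine ⟨fun k => ?_, fun k hk => ?_⟩
    · rcases eq_or_ne k j with rfl | hkj
      · have := h1 k; rw [Pi.single_eq_same] at this; omega
      · have := h1 k; rw [Pi.single_eq_of_ne hkj] at this; omega
    · rcases eq_or_ne k j with rfl | hkj
      · have h3 := h2 k hk; rw [Pi.single_eq_same] at h3
        have := hZlt p k hk; omega
      · have := h2 k hk; rw [Pi.single_eq_of_ne hkj] at this; omega

lemma aux_T_step {n : ℕ} {s c : Fin n → ℤ} {j : Fin n} (hs : s j + 1 ≤ c j) :
    auxT s c = auxT s (c - Pi.single j 1) + Finsupp.single j 1 := by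
  ext k
  simp only [Finsupp.add_apply, auxT_apply, Pi.sub_apply]
  rcases eq_or_ne k j with rfl | hkj
  · rw [Pi.single_eq_same, Finsupp.single_eq_same]; omega
  · rw [Pi.single_eq_of_ne hkj, Finsupp.single_eq_of_ne' (Ne.symm hkj)]; omega

lemma aux_deg_T {n : ℕ} {s c : Fin n → ℤ} (h : ∀ j, s j ≤ c j) :
    s + auxDeg (auxT s c) = c := by
  funext j
  simp only [Pi.add_apply, auxDeg, auxT_apply]
  have := h j; omega

lemma aux_term_mem {gr : (Fin n → ℤ) → Submodule K M} (hsmul : GradedSMul gr)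
    {s c : Fin n → ℤ} {v : M} (hv : v ∈ gr s) (h : ∀ j, s j ≤ c j) :
    (MvPolynomial.monomial (auxT s c) (1 : K) : MvPolynomial (Fin n) K) • v ∈ gr c := by
  have := aux_mono_smul_mem hsmul _ (auxT s c) rfl s v hv
  rwa [aux_deg_T h] at this

lemma aux_degIndep {ι : Type*} [Fintype ι] [DecidableEq ι]
    {gr : (Fin n → ℤ) → Submodule K M} (hsmul : GradedSMul gr)
    (g : Fin n → ℤ) (hg : (0 : Fin n → ℤ) ≤ g)
    (hM : PosDetermined gr g)
    (Z : ι → Finset (Fin n)) (s : ι → Fin n → ℤ) (m : ι → M)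
    (hm : ∀ p, m p ∈ gr (s p))
    (hsg : ∀ p j, s p j ≤ g j) (hZlt : ∀ p j, j ∉ Z p → s p j < g j)
    (hrel : ∀ f : ι → MvPolynomial (Fin n) K,
      (∀ p, f p ∈ MvPolynomial.supported K (↑(Z p) : Set (Fin n))) →
      (∀ p, ∀ t ∈ (f p).support, ∀ j, s p j + (t j : ℤ) ≤ g j) →
      (∑ p, f p • m p) = 0 → ∀ p, f p = 0) :
    ∀ (N : ℕ) (c : Fin n → ℤ), (∑ j, (c j - g j).toNat) = N → (0 : Fin n → ℤ) ≤ c →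
      ∀ α : ι → K,
        (∑ p ∈ auxAdm Z s c, α p •
          ((MvPolynomial.monomial (auxT (s p) c) (1 : K) : MvPolynomial (Fin n) K) • m p)) = 0 →
        ∀ p ∈ auxAdm Z s c, α p = 0 := by
  intro N
  induction N using Nat.strong_induction_on with
  | _ N ih =>
  intro c hNc h0c α hrel0 p hp
  by_cases hcg : ∀ j, c j ≤ g j
  · -- base case: `c ⪯ g`, use the hypothesis `hrel` directly
    classical
    set f : ι → MvPolynomial (Fin n) K := fun p' =>
      if p' ∈ auxAdm Z s c then MvPolynomial.monomial (auxT (s p') c) (α p') else 0 with hf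
    have hf1 : ∀ p', f p' ∈ MvPolynomial.supported K (↑(Z p') : Set (Fin n)) := by
      intro p'
      rw [hf]
      dsimp only
      split_ifs with hmem
      · refine aux_monomial_mem_supported _ fun j hj => ?_
        have := (mem_auxAdm.mp hmem).2 j hj
        simp only [auxT_apply]; omega
      · exact zero_mem _
    have hf2 : ∀ p', ∀ t ∈ (f p').support, ∀ j, s p' j + (t j : ℤ) ≤ g j := by
      intro p' t ht j
      rw [hf] at ht
      dsimp only at ht
      split_ifs at ht with hmem
      · have hts : t = auxT (s p') c := by
          have := MvPolynomial.support_monomial_subset ht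
          simpa using this
        subst hts
        have h1 := (mem_auxAdm.mp hmem).1 j
        have h2 := hcg j
        simp only [auxT_apply]; omega
      · simp at ht
    have hf3 : (∑ p', f p' • m p') = 0 := by
      have heach : ∀ p', f p' • m p' = if p' ∈ auxAdm Z s c then
          α p' • ((MvPolynomial.monomial (auxT (s p') c) (1 : K) :
            MvPolynomial (Fin n) K) • m p') else 0 := by
        intro p'
        rw [hf]
        dsimp only
        split_ifs with hmem
        · rw [aux_monomial_smul_eq]
        · rw [zero_smul]
      rw [Finset.sum_congr rfl fun p' _ => heach p', Finset.sum_ite_mem,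
        Finset.univ_inter, hrel0]
    have hfp := hrel f hf1 hf2 hf3 p
    rw [hf] at hfp
    dsimp only at hfp
    rw [if_pos hp] at hfp
    exact MvPolynomial.monomial_eq_zero.mp hfp
  · -- inductive step: reduce the degree at a coordinate `j` with `c j > g j`
    push_neg at hcg
    obtain ⟨j, hjlt⟩ := hcg
    have hj' : g j + 1 ≤ c j := by omega
    set c' : Fin n → ℤ := c - Pi.single j 1 with hc'def
    have hadm : auxAdm Z s c = auxAdm Z s c' := by
      have := aux_adm_step g Z s hsg hZlt c j hj'
      rwa [← hc'def] at this
    have hc'j : c' j = c j - 1 := by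
      rw [hc'def]; simp [Pi.single_eq_same]
    have hc'k : ∀ k, k ≠ j → c' k = c k := by
      intro k hk
      rw [hc'def]; simp [Pi.single_eq_of_ne hk]
    have h0c' : (0 : Fin n → ℤ) ≤ c' := by
      intro k
      rcases eq_or_ne k j with rfl | hkj
      · rw [hc'j]; have := hg k; simp only [Pi.zero_apply] at this ⊢; omega
      · rw [hc'k k hkj]; exact h0c k
    have hmeas : (∑ k, (c' k - g k).toNat) < N := by
      have e1 := (Finset.add_sum_erase Finset.univ (fun k => (c k - g k).toNat)
        (Finset.mem_univ j)).symm
      have e2 := (Finset.add_sum_erase Finset.univ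
        (fun k => (c' k - g k).toNat) (Finset.mem_univ j)).symm
      have e3 : (∑ k ∈ Finset.univ.erase j, (c' k - g k).toNat)
          = ∑ k ∈ Finset.univ.erase j, (c k - g k).toNat := by
        refine Finset.sum_congr rfl fun k hk => ?_
        rw [hc'k k (Finset.mem_erase.mp hk).1]
      rw [e3] at e2
      rw [hc'j] at e2
      omega
    set y := ∑ p' ∈ auxAdm Z s c', α p' •
      ((MvPolynomial.monomial (auxT (s p') c') (1 : K) :
        MvPolynomial (Fin n) K) • m p') with hy
    have hymem : y ∈ gr c' := by
      rw [hy]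
      exact Submodule.sum_mem _ fun p' hp' => Submodule.smul_mem _ _
        (aux_term_mem hsmul (hm p') fun k => (mem_auxAdm.mp hp').1 k)
    have hXy : (MvPolynomial.X j : MvPolynomial (Fin n) K) • y = 0 := by
      rw [hy, Finset.smul_sum]
      have heach : ∀ p' ∈ auxAdm Z s c',
          (MvPolynomial.X j : MvPolynomial (Fin n) K) • (α p' •
            ((MvPolynomial.monomial (auxT (s p') c') (1 : K) :
              MvPolynomial (Fin n) K) • m p'))
          = α p' • ((MvPolynomial.monomial (auxT (s p') c) (1 : K) :
              MvPolynomial (Fin n) K) • m p') := by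
        intro p' _
        rw [aux_smul_comm, ← mul_smul, aux_X_mul_monomial]
        have hT := aux_T_step (s := s p') (c := c) (j := j) (by have := hsg p' j; omega)
        rw [← hc'def] at hT
        rw [← hT]
      rw [Finset.sum_congr rfl heach, ← hadm, hrel0]
    have hy0 : y = 0 := by
      have hginj := (hM.2 j c' (by rw [hc'j]; omega)).1
      have hmem2 : y ∈ gr c' := hymem
      exact hginj y hmem2 hXy
    rw [hy] at hy0
    exact ih _ hmeas c' rfl h0c' α hy0 p (hadm ▸ hp)

/-- The degree-`c` projection `M →ₗ[K] M`. -/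
noncomputable def auxProj (gr : (Fin n → ℤ) → Submodule K M) [DirectSum.Decomposition gr]
    (c : Fin n → ℤ) : M →ₗ[K] M :=
  (gr c).subtype ∘ₗ (DirectSum.component K (Fin n → ℤ) (fun d => ↥(gr d)) c) ∘ₗ
    (DirectSum.decomposeLinearEquiv gr).toLinearMap

lemma auxProj_apply (gr : (Fin n → ℤ) → Submodule K M) [DirectSum.Decomposition gr]
    (c : Fin n → ℤ) (x : M) :
    auxProj gr c x = (DirectSum.decompose gr x c : M) := rfl

lemma auxProj_same {gr : (Fin n → ℤ) → Submodule K M} [DirectSum.Decomposition gr]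
    {c : Fin n → ℤ} {x : M} (hx : x ∈ gr c) : auxProj gr c x = x := by
  rw [auxProj_apply]
  exact DirectSum.decompose_of_mem_same gr hx

lemma auxProj_ne {gr : (Fin n → ℤ) → Submodule K M} [DirectSum.Decomposition gr]
    {d c : Fin n → ℤ} {x : M} (hx : x ∈ gr d) (h : d ≠ c) : auxProj gr c x = 0 := by
  rw [auxProj_apply]
  exact DirectSum.decompose_of_mem_ne gr hx h

lemma aux_keyRel {ι : Type*} [Fintype ι] [DecidableEq ι]
    {gr : (Fin n → ℤ) → Submodule K M} [DirectSum.Decomposition gr]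
    (hsmul : GradedSMul gr) (g : Fin n → ℤ)
    (Z : ι → Finset (Fin n)) (s : ι → Fin n → ℤ) (m : ι → M)
    (hm : ∀ p, m p ∈ gr (s p)) (hs0 : ∀ p, (0 : Fin n → ℤ) ≤ s p)
    (hA : ∀ c : Fin n → ℤ, (0 : Fin n → ℤ) ≤ c → ∀ α : ι → K,
      (∑ p ∈ auxAdm Z s c, α p •
        ((MvPolynomial.monomial (auxT (s p) c) (1 : K) : MvPolynomial (Fin n) K) • m p)) = 0 →
      ∀ p ∈ auxAdm Z s c, α p = 0)
    (q : ι → MvPolynomial (Fin n) K)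
    (hq : ∀ p, q p ∈ MvPolynomial.supported K (↑(Z p) : Set (Fin n)))
    (hsum : (∑ p, q p • m p) = 0) :
    ∀ p, q p = 0 := by
  have claim : ∀ c : Fin n → ℤ, (0 : Fin n → ℤ) ≤ c →
      ∀ p ∈ auxAdm Z s c, (q p).coeff (auxT (s p) c) = 0 := by
    intro c h0c
    refine hA c h0c (fun p => (q p).coeff (auxT (s p) c)) ?_
    have hproj := congrArg (auxProj gr c) hsum
    rw [map_zero, map_sum] at hproj
    have heach : ∀ p, auxProj gr c (q p • m p)
        = if p ∈ auxAdm Z s c then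
            (q p).coeff (auxT (s p) c) •
              ((MvPolynomial.monomial (auxT (s p) c) (1 : K) :
                MvPolynomial (Fin n) K) • m p) else 0 := by
      intro p
      have hqexp : q p • m p = ∑ t ∈ (q p).support,
          (q p).coeff t • ((MvPolynomial.monomial t (1 : K) :
            MvPolynomial (Fin n) K) • m p) := by
        rw [show q p • m p = ∑ t ∈ (q p).support,
            (MvPolynomial.monomial t ((q p).coeff t)) • m p from by
          rw [← Finset.sum_smul, ← (q p).as_sum]]
        exact Finset.sum_congr rfl fun t _ => aux_monomial_smul_eq t _ (m p)
      rw [hqexp, map_sum]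
      have hterm : ∀ t ∈ (q p).support,
          auxProj gr c ((q p).coeff t • ((MvPolynomial.monomial t (1 : K) :
            MvPolynomial (Fin n) K) • m p))
          = if s p + auxDeg t = c then
              (q p).coeff t • ((MvPolynomial.monomial t (1 : K) :
                MvPolynomial (Fin n) K) • m p) else 0 := by
        intro t _
        have hmem : (q p).coeff t • ((MvPolynomial.monomial t (1 : K) :
            MvPolynomial (Fin n) K) • m p) ∈ gr (s p + auxDeg t) :=
          Submodule.smul_mem _ _ (aux_mono_smul_mem hsmul _ t rfl (s p) (m p) (hm p))
        split_ifs with hdc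
        · exact auxProj_same (hdc ▸ hmem)
        · exact auxProj_ne hmem hdc
      rw [Finset.sum_congr rfl hterm]
      split_ifs with hpadm
      · have hcond : ∀ t ∈ (q p).support, (s p + auxDeg t = c) ↔ t = auxT (s p) c := by
          intro t _
          constructor
          · intro hdc
            ext k
            have := congrFun hdc k
            simp only [Pi.add_apply, auxDeg, auxT_apply] at this ⊢
            omega
          · rintro rfl
            exact aux_deg_T fun k => (mem_auxAdm.mp hpadm).1 k
        rw [Finset.sum_congr rfl fun t ht => if_congr (hcond t ht) rfl rfl,
          Finset.sum_ite_eq']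
        split_ifs with hin
        · rfl
        · rw [MvPolynomial.notMem_support_iff.mp hin, zero_smul]
      · refine Finset.sum_eq_zero fun t ht => ?_
        rw [if_neg]
        intro hdc
        apply hpadm
        rw [mem_auxAdm]
        constructor
        · intro k
          have := congrFun hdc k
          simp only [Pi.add_apply, auxDeg] at this
          omega
        · intro k hk
          have ht0 : t k = 0 := aux_supported_exponent (hq p) t ht k hk
          have := congrFun hdc k
          simp only [Pi.add_apply, auxDeg, ht0] at this
          omega
    rw [Finset.sum_congr rfl fun p _ => heach p, Finset.sum_ite_mem,
      Finset.univ_inter] at hproj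
    exact hproj
  intro p
  by_contra hqp
  have hne : (q p).support.Nonempty := by
    rw [Finset.nonempty_iff_ne_empty]
    intro h
    exact hqp (MvPolynomial.support_eq_empty.mp h)
  obtain ⟨t, ht⟩ := hne
  have h0c : (0 : Fin n → ℤ) ≤ s p + auxDeg t := by
    intro k
    have := hs0 p k
    simp only [Pi.zero_apply, Pi.add_apply, auxDeg] at this ⊢
    omega
  have hpadm : p ∈ auxAdm Z s (s p + auxDeg t) := by
    rw [mem_auxAdm]
    constructor
    · intro k
      simp only [Pi.add_apply, auxDeg]
      omega
    · intro k hk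
      have ht0 : t k = 0 := aux_supported_exponent (hq p) t ht k hk
      simp only [Pi.add_apply, auxDeg, ht0]
      omega
  have hTt : auxT (s p) (s p + auxDeg t) = t := by
    ext k
    simp only [auxT_apply, Pi.add_apply, auxDeg]
    omega
  have := claim (s p + auxDeg t) h0c p hpadm
  rw [hTt] at this
  exact MvPolynomial.mem_support_iff.mp ht this

lemma aux_rank_step {gr : (Fin n → ℤ) → Submodule K M} (hsmul : GradedSMul gr)
    (c' : Fin n → ℤ) (j : Fin n)
    (hinj : ∀ x ∈ gr c', (MvPolynomial.X j : MvPolynomial (Fin n) K) • x = 0 → x = 0)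
    (hsurj : ∀ y ∈ gr (c' + Pi.single j 1), ∃ x ∈ gr c',
      (MvPolynomial.X j : MvPolynomial (Fin n) K) • x = y) :
    Module.rank K ↥(gr (c' + Pi.single j 1)) = Module.rank K ↥(gr c') := by
  let L : ↥(gr c') →ₗ[K] ↥(gr (c' + Pi.single j 1)) :=
    { toFun := fun x => ⟨(MvPolynomial.X j : MvPolynomial (Fin n) K) • (x : M),
        hsmul j c' x x.2⟩
      map_add' := fun x y => Subtype.ext (by simp [smul_add])
      map_smul' := fun k x => Subtype.ext (by simp [aux_smul_comm]) }
  have hbij : Function.Bijective L := by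
    constructor
    · intro x y hxy
      have hval : (MvPolynomial.X j : MvPolynomial (Fin n) K) • (x : M)
          = (MvPolynomial.X j : MvPolynomial (Fin n) K) • (y : M) :=
        congrArg Subtype.val hxy
      have h1 : (MvPolynomial.X j : MvPolynomial (Fin n) K) • ((x : M) - y) = 0 := by
        rw [smul_sub, hval, sub_self]
      have h2 := hinj _ (sub_mem x.2 y.2) h1
      exact Subtype.ext (by rwa [sub_eq_zero] at h2)
    · intro y
      obtain ⟨x, hx, hxy⟩ := hsurj y y.2
      exact ⟨⟨x, hx⟩, Subtype.ext hxy⟩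
  exact ((LinearEquiv.ofBijective L hbij).rank_eq).symm

lemma aux_countAll {ι : Type*} [Fintype ι]
    {gr : (Fin n → ℤ) → Submodule K M} (hsmul : GradedSMul gr)
    (g : Fin n → ℤ) (hg : (0 : Fin n → ℤ) ≤ g) (hM : PosDetermined gr g)
    (Z : ι → Finset (Fin n)) (s : ι → Fin n → ℤ)
    (hs0 : ∀ p, (0 : Fin n → ℤ) ≤ s p) (hsg : ∀ p j, s p j ≤ g j)
    (hZlt : ∀ p j, j ∉ Z p → s p j < g j)
    (hbase : ∀ c, (0 : Fin n → ℤ) ≤ c → (∀ j, c j ≤ g j) →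
      Module.rank K ↥(gr c) = ((auxAdm Z s c).card : Cardinal)) :
    ∀ (N : ℕ) (c : Fin n → ℤ), (∑ j, (c j - g j).toNat) = N →
      Module.rank K ↥(gr c) = ((auxAdm Z s c).card : Cardinal) := by
  intro N
  induction N using Nat.strong_induction_on with
  | _ N ih =>
  intro c hNc
  by_cases h0c : (0 : Fin n → ℤ) ≤ c
  · by_cases hcg : ∀ j, c j ≤ g j
    · exact hbase c h0c hcg
    · push_neg at hcg
      obtain ⟨j, hjlt⟩ := hcg
      have hj' : g j + 1 ≤ c j := by omega
      set c' : Fin n → ℤ := c - Pi.single j 1 with hc'def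
      have hadm : auxAdm Z s c = auxAdm Z s c' := by
        have := aux_adm_step g Z s hsg hZlt c j hj'
        rwa [← hc'def] at this
      have hc'j : c' j = c j - 1 := by
        rw [hc'def]; simp [Pi.single_eq_same]
      have hc'k : ∀ k, k ≠ j → c' k = c k := by
        intro k hk
        rw [hc'def]; simp [Pi.single_eq_of_ne hk]
      have hmeas : (∑ k, (c' k - g k).toNat) < N := by
        have e1 := (Finset.add_sum_erase Finset.univ (fun k => (c k - g k).toNat)
          (Finset.mem_univ j)).symm
        have e2 := (Finset.add_sum_erase Finset.univ
          (fun k => (c' k - g k).toNat) (Finset.mem_univ j)).symm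
        have e3 : (∑ k ∈ Finset.univ.erase j, (c' k - g k).toNat)
            = ∑ k ∈ Finset.univ.erase j, (c k - g k).toNat := by
          refine Finset.sum_congr rfl fun k hk => ?_
          rw [hc'k k (Finset.mem_erase.mp hk).1]
        rw [e3] at e2
        rw [hc'j] at e2
        omega
      have hc'add : c' + Pi.single j 1 = c := by
        funext k
        rcases eq_or_ne k j with rfl | hkj
        · rw [Pi.add_apply, hc'j, Pi.single_eq_same]; omega
        · rw [Pi.add_apply, hc'k k hkj, Pi.single_eq_of_ne hkj]; omega
      have hgc' : g j ≤ c' j := by rw [hc'j]; omega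
      have hrk := aux_rank_step hsmul c' j ((hM.2 j c' hgc').1) ((hM.2 j c' hgc').2)
      rw [hc'add] at hrk
      rw [hrk, hadm]
      exact ih _ hmeas c' rfl
  · have hbot : gr c = ⊥ := hM.1 c h0c
    have hcard : auxAdm Z s c = ∅ := by
      rw [Finset.eq_empty_iff_forall_notMem]
      intro p hp
      apply h0c
      intro k
      have h1 := (mem_auxAdm.mp hp).1 k
      have h2 := hs0 p k
      simp only [Pi.zero_apply] at h2 ⊢
      omega
    rw [hbot, hcard]
    simp [rank_bot]

lemma aux_mem_Gset {n : ℕ} {g a b w : Fin n → ℤ} :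
    w ∈ Gset g a b ↔ (a ≤ w ∧ w ≤ b) ∧ ∀ j, b j = g j → w j = a j := by
  simp [Gset, Finset.mem_Icc]

lemma aux_mem_Zset {n : ℕ} {g b : Fin n → ℤ} {j : Fin n} :
    j ∈ Zset g b ↔ b j = g j := by
  simp [Zset]

lemma aux_countBase {r : ℕ} (g : Fin n → ℤ) (a b : Fin r → Fin n → ℤ)
    {gr : (Fin n → ℤ) → Submodule K M} (hP : IsHilbertPartition gr g a b) :
    ∀ c, (0 : Fin n → ℤ) ≤ c → (∀ j, c j ≤ g j) →
      Module.rank K ↥(gr c) =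
        ((auxAdm (fun p : (Σ i : Fin r, {w // w ∈ Gset g (a i) (b i)}) => Zset g (b p.1))
          (fun p => (p.2 : Fin n → ℤ)) c).card : Cardinal) := by
  intro c h0c hcg
  rw [hP.2 c h0c (fun j => hcg j)]
  have hcards : (auxAdm (fun p : (Σ i : Fin r, {w // w ∈ Gset g (a i) (b i)}) =>
        Zset g (b p.1)) (fun p => (p.2 : Fin n → ℤ)) c).card
      = ((Finset.univ : Finset (Fin r)).filter
          fun i => (∀ j, a i j ≤ c j) ∧ (∀ j, c j ≤ b i j)).card := by
    refine Finset.card_bij (fun p _ => p.1) ?_ ?_ ?_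
    · intro p hp
      obtain ⟨h1, h2⟩ := mem_auxAdm.mp hp
      have hG := p.2.2
      rw [aux_mem_Gset] at hG
      rw [Finset.mem_filter]
      refine ⟨Finset.mem_univ _, fun j => le_trans (hG.1.1 j) (h1 j), fun j => ?_⟩
      by_cases hbg : b p.1 j = g j
      · rw [hbg]; exact hcg j
      · have hnz : j ∉ Zset g (b p.1) := by
          rw [aux_mem_Zset]
          exact hbg
        rw [h2 j hnz]
        exact hG.1.2 j
    · rintro ⟨i1, w1⟩ hp1 ⟨i2, w2⟩ hp2 h
      dsimp only at h
      subst h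
      obtain ⟨_, h12⟩ := mem_auxAdm.mp hp1
      obtain ⟨_, h22⟩ := mem_auxAdm.mp hp2
      have hG1 := w1.2
      have hG2 := w2.2
      rw [aux_mem_Gset] at hG1 hG2
      congr 1
      apply Subtype.ext
      funext j
      by_cases hbg : b i1 j = g j
      · rw [hG1.2 j hbg, hG2.2 j hbg]
      · have hnz : j ∉ Zset g (b i1) := by
          rw [aux_mem_Zset]
          exact hbg
        rw [← h12 j hnz, ← h22 j hnz]
    · intro i hi
      rw [Finset.mem_filter] at hi
      obtain ⟨_, hac, hcb⟩ := hi
      classical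
      set w : Fin n → ℤ := fun j => if b i j = g j then a i j else c j with hw
      have hwG : w ∈ Gset g (a i) (b i) := by
        rw [aux_mem_Gset]
        refine ⟨⟨fun j => ?_, fun j => ?_⟩, fun j hbg => ?_⟩
        · rw [hw]; dsimp only; split_ifs with h
          · exact le_refl _
          · exact hac j
        · rw [hw]; dsimp only; split_ifs with h
          · exact (hP.1 i).2.1 j
          · exact hcb j
        · rw [hw]; dsimp only; rw [if_pos hbg]
      refine ⟨⟨i, ⟨w, hwG⟩⟩, ?_, rfl⟩
      rw [mem_auxAdm]
      constructor
      · intro j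
        show w j ≤ c j
        rw [hw]; dsimp only; split_ifs with h
        · exact hac j
        · exact le_refl _
      · intro j hj
        have hbg : ¬ b i j = g j := by
          rw [aux_mem_Zset] at hj
          exact hj
        show c j = w j
        rw [hw]; dsimp only; rw [if_neg hbg]
  rw [hcards]

lemma aux_spanDeg {ι : Type*} [Fintype ι] [DecidableEq ι]
    {gr : (Fin n → ℤ) → Submodule K M} (hsmul : GradedSMul gr) (g : Fin n → ℤ)
    (hM1 : ∀ c, ¬ (0 : Fin n → ℤ) ≤ c → gr c = ⊥)
    (Z : ι → Finset (Fin n)) (s : ι → Fin n → ℤ) (m : ι → M)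
    (hm : ∀ p, m p ∈ gr (s p))
    (hcard : ∀ c, Module.rank K ↥(gr c) = ((auxAdm Z s c).card : Cardinal))
    (hA : ∀ c : Fin n → ℤ, (0 : Fin n → ℤ) ≤ c → ∀ α : ι → K,
      (∑ p ∈ auxAdm Z s c, α p •
        ((MvPolynomial.monomial (auxT (s p) c) (1 : K) : MvPolynomial (Fin n) K) • m p)) = 0 →
      ∀ p ∈ auxAdm Z s c, α p = 0)
    (c : Fin n → ℤ) : gr c ≤ ⨆ p, stanleySpace K (m p) (Z p) := by
  by_cases h0c : (0 : Fin n → ℤ) ≤ c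
  swap
  · rw [hM1 c h0c]; exact bot_le
  by_cases hA0 : auxAdm Z s c = ∅
  · have h0 : Module.rank K ↥(gr c) = 0 := by
      rw [hcard c, hA0]; simp
    have hbot : gr c = ⊥ := Submodule.rank_eq_zero.mp h0
    rw [hbot]; exact bot_le
  have hne : (auxAdm Z s c).Nonempty := Finset.nonempty_of_ne_empty hA0
  haveI : Nonempty ↥(auxAdm Z s c) := ⟨⟨hne.choose, hne.choose_spec⟩⟩
  set v : ↥(auxAdm Z s c) → M := fun p =>
    (MvPolynomial.monomial (auxT (s p.1) c) (1 : K) : MvPolynomial (Fin n) K) • m p.1 with hv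
  have hvmem : ∀ p, v p ∈ gr c := fun p =>
    aux_term_mem hsmul (hm p.1) fun k => (mem_auxAdm.mp p.2).1 k
  set v' : ↥(auxAdm Z s c) → ↥(gr c) := fun p => ⟨v p, hvmem p⟩ with hv'
  have hli : LinearIndependent K v' := by
    rw [Fintype.linearIndependent_iff]
    intro coef hcoef p
    have hM0 : (∑ p', coef p' • v p') = 0 := by
      have hval := congrArg (Subtype.val) hcoef
      push_cast at hval
      exact hval
    classical
    set α : ι → K := fun p' => if h : p' ∈ auxAdm Z s c then coef ⟨p', h⟩ else 0 with hα
    have hsum0 : (∑ p' ∈ auxAdm Z s c, α p' •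
        ((MvPolynomial.monomial (auxT (s p') c) (1 : K) : MvPolynomial (Fin n) K) • m p')) = 0 := by
      rw [← hM0, ← Finset.sum_attach (auxAdm Z s c) (fun p' => α p' •
        ((MvPolynomial.monomial (auxT (s p') c) (1 : K) : MvPolynomial (Fin n) K) • m p'))]
      refine Finset.sum_congr rfl fun p' _ => ?_
      rw [hα]; dsimp only; rw [dif_pos p'.2]
    have := hA c h0c α hsum0 p.1 p.2
    rw [hα] at this; dsimp only at this; rw [dif_pos p.2] at this
    exact this
  haveI hfd : Module.Finite K ↥(gr c) := Module.finite_of_rank_eq_nat (hcard c)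
  have hfr : Module.finrank K ↥(gr c) = (auxAdm Z s c).card :=
    Module.finrank_eq_of_rank_eq (hcard c)
  have hcardeq : Fintype.card ↥(auxAdm Z s c) = Module.finrank K ↥(gr c) := by
    rw [hfr, Fintype.card_coe]
  have hspan := hli.span_eq_top_of_card_eq_finrank hcardeq
  intro x hx
  have hx' : (⟨x, hx⟩ : ↥(gr c)) ∈ Submodule.span K (Set.range v') := by
    rw [hspan]; trivial
  have hmapped : x ∈ Submodule.map (gr c).subtype (Submodule.span K (Set.range v')) :=
    ⟨⟨x, hx⟩, hx', rfl⟩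
  rw [Submodule.map_span] at hmapped
  have himg : (gr c).subtype '' (Set.range v') = Set.range v := by
    ext z
    constructor
    · rintro ⟨_, ⟨p, rfl⟩, rfl⟩
      exact ⟨p, rfl⟩
    · rintro ⟨p, rfl⟩
      exact ⟨v' p, ⟨p, rfl⟩, rfl⟩
  rw [himg] at hmapped
  refine Submodule.span_le.mpr ?_ hmapped
  rintro z ⟨p, rfl⟩
  have hsupp : ∀ j ∉ Z p.1, auxT (s p.1) c j = 0 := by
    intro j hj
    have := (mem_auxAdm.mp p.2).2 j hj
    simp only [auxT_apply]
    omega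
  have hz : v p ∈ stanleySpace K (m p.1) (Z p.1) :=
    Submodule.subset_span ⟨auxT (s p.1) c, hsupp, rfl⟩
  exact Submodule.mem_iSup_of_mem p.1 hz

end Aux

/-- **Proposition.**  Let `𝔓` be a Hilbert partition of `H_M(X)_{⪯g}` with induced
Hilbert decomposition `𝔇(𝔓) : M ≅ ⊕_{i∈I} Rᵢ(−sᵢ)`, where `I` is the (finite) set of
pairs `(i, c)` with `c ∈ 𝓖[aⁱ,bⁱ]`, `Rᵢ = K[Z_{bⁱ}]` and `sᵢ = c ⪯ g`, and for each
`i ∈ I` choose `0 ≠ mᵢ ∈ M_{sᵢ}`.  Then `M = ⊕_{i∈I} mᵢRᵢ` is a Stanley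
decomposition of `M` if and only if `Rᵢ ∩ Ann(mᵢ) = 0` for all `i ∈ I` and the only
relation `Σ_{i∈I} mᵢ (Σ_{sᵢ+t ⪯ g} α_t X^t) = 0` (with `α_t ∈ K`, `X^t ∈ Rᵢ`) is the
trivial one. -/
theorem induced_decomposition_isStanley_iff
    (gr : (Fin n → ℤ) → Submodule K M) [DirectSum.Decomposition gr]
    (hsmul : GradedSMul gr) [Module.Finite (MvPolynomial (Fin n) K) M]
    (g : Fin n → ℤ) (hg : (0 : Fin n → ℤ) ≤ g)
    (hM : PosDetermined gr g)
    {r : ℕ} (a b : Fin r → Fin n → ℤ)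
    (hP : IsHilbertPartition gr g a b)
    (m : (Σ i : Fin r, {w // w ∈ Gset g (a i) (b i)}) → M)
    (hm : ∀ p, m p ∈ gr (p.2 : Fin n → ℤ)) (hm0 : ∀ p, m p ≠ 0) :
    IsStanleyDecomp gr (fun p => Zset g (b p.1)) (fun p => (p.2 : Fin n → ℤ)) m
      ↔
    ((∀ p, ∀ q ∈ MvPolynomial.supported K (↑(Zset g (b p.1)) : Set (Fin n)),
        q • m p = 0 → q = 0) ∧
      ∀ f : (Σ i : Fin r, {w // w ∈ Gset g (a i) (b i)}) → MvPolynomial (Fin n) K,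
        (∀ p, f p ∈ MvPolynomial.supported K (↑(Zset g (b p.1)) : Set (Fin n))) →
        (∀ p, ∀ t ∈ (f p).support, ∀ j, ((p.2 : Fin n → ℤ) j) + (t j : ℤ) ≤ g j) →
        (∑ p, f p • m p) = 0 → ∀ p, f p = 0) := by
  classical
  have hs0 : ∀ p : (Σ i : Fin r, {w // w ∈ Gset g (a i) (b i)}),
      (0 : Fin n → ℤ) ≤ (p.2 : Fin n → ℤ) := by
    intro p
    have hG := aux_mem_Gset.mp p.2.2
    exact le_trans (hP.1 p.1).1 hG.1.1
  have hsg : ∀ p : (Σ i : Fin r, {w // w ∈ Gset g (a i) (b i)}),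
      ∀ j, (p.2 : Fin n → ℤ) j ≤ g j := by
    intro p j
    have hG := aux_mem_Gset.mp p.2.2
    exact le_trans (hG.1.2 j) ((hP.1 p.1).2.2 j)
  have hZlt : ∀ p : (Σ i : Fin r, {w // w ∈ Gset g (a i) (b i)}),
      ∀ j, j ∉ Zset g (b p.1) → (p.2 : Fin n → ℤ) j < g j := by
    intro p j hj
    rw [aux_mem_Zset] at hj
    have hG := aux_mem_Gset.mp p.2.2
    have h1 : (p.2 : Fin n → ℤ) j ≤ b p.1 j := hG.1.2 j
    have h2 : b p.1 j ≤ g j := (hP.1 p.1).2.2 j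
    omega
  constructor
  · rintro ⟨h1, h2, hind, hsup⟩
    refine ⟨h2, ?_⟩
    intro f hfsupp hfdeg hfsum p
    have hx : ∀ q, f q • m q ∈ stanleySpace K (m q) (Zset g (b q.1)) := fun q =>
      aux_smul_mem_stanley (hfsupp q) (m q)
    have hdisj := iSupIndep_def.mp hind p
    have hmem2 : f p • m p ∈ ⨆ (q) (_ : q ≠ p), stanleySpace K (m q) (Zset g (b q.1)) := by
      have hre : f p • m p = - ∑ q ∈ Finset.univ.erase p, f q • m q := by
        have hps := Finset.add_sum_erase Finset.univ (fun q => f q • m q) (Finset.mem_univ p)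
        rw [hfsum] at hps
        simpa using eq_neg_of_add_eq_zero_left hps
      rw [hre]
      refine neg_mem (Submodule.sum_mem _ fun q hq => ?_)
      have hqp : q ≠ p := (Finset.mem_erase.mp hq).1
      exact Submodule.mem_iSup_of_mem q (Submodule.mem_iSup_of_mem hqp (hx q))
    have h0 : f p • m p = 0 := Submodule.disjoint_def.mp hdisj _ (hx p) hmem2
    exact h2 p (f p) (hfsupp p) h0
  · rintro ⟨hann, hrel⟩
    have hA := fun (c : Fin n → ℤ) (h0c : (0 : Fin n → ℤ) ≤ c) =>
      aux_degIndep (ι := (Σ i : Fin r, {w // w ∈ Gset g (a i) (b i)}))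
        (gr := gr) hsmul g hg hM (fun p => Zset g (b p.1))
        (fun p => (p.2 : Fin n → ℤ)) m hm hsg hZlt hrel _ c rfl h0c
    have hcard := fun (c : Fin n → ℤ) =>
      aux_countAll (ι := (Σ i : Fin r, {w // w ∈ Gset g (a i) (b i)}))
        (gr := gr) hsmul g hg hM (fun p => Zset g (b p.1))
        (fun p => (p.2 : Fin n → ℤ)) hs0 hsg hZlt (aux_countBase g a b hP) _ c rfl
    have hkey := aux_keyRel (ι := (Σ i : Fin r, {w // w ∈ Gset g (a i) (b i)}))
      (gr := gr) hsmul g (fun p => Zset g (b p.1))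
      (fun p => (p.2 : Fin n → ℤ)) m hm hs0 hA
    refine ⟨hm, hann, ?_, ?_⟩
    · rw [iSupIndep_def]
      intro p
      rw [Submodule.disjoint_def]
      intro x hxp hxsup
      have hEq : (⨆ (q) (_ : q ≠ p), stanleySpace K (m q) (Zset g (b q.1)))
          = ⨆ q ∈ Finset.univ.erase p, stanleySpace K (m q) (Zset g (b q.1)) := by
        refine le_antisymm (iSup₂_le fun q hq => ?_) (iSup₂_le fun q hq => ?_)
        · exact le_iSup₂ (f := fun q _ => stanleySpace K (m q) (Zset g (b q.1))) q
            (Finset.mem_erase.mpr ⟨hq, Finset.mem_univ q⟩)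
        · exact le_iSup₂ (f := fun q _ => stanleySpace K (m q) (Zset g (b q.1))) q
            (Finset.mem_erase.mp hq).1
      rw [hEq, Submodule.mem_iSup_finset_iff_exists_sum] at hxsup
      obtain ⟨μ, hμ⟩ := hxsup
      have hch : ∀ q, ∃ pol ∈ MvPolynomial.supported K (↑(Zset g (b q.1)) : Set (Fin n)),
          pol • m q = (μ q : M) := fun q => aux_stanley_elem (μ q).2
      choose pol hpolsupp hpolval using hch
      obtain ⟨polp, hpolp, hpolpx⟩ := aux_stanley_elem hxp
      set Q : (Σ i : Fin r, {w // w ∈ Gset g (a i) (b i)}) → MvPolynomial (Fin n) K :=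
        fun q => if q = p then -polp else pol q with hQ
      have hQsupp : ∀ q, Q q ∈ MvPolynomial.supported K (↑(Zset g (b q.1)) : Set (Fin n)) := by
        intro q
        rw [hQ]; dsimp only
        split_ifs with h
        · subst h; exact neg_mem hpolp
        · exact hpolsupp q
      have hQsum : (∑ q, Q q • m q) = 0 := by
        rw [← Finset.add_sum_erase Finset.univ (fun q => Q q • m q) (Finset.mem_univ p)]
        have hq1 : Q p • m p = -x := by
          rw [hQ]; dsimp only; rw [if_pos rfl, neg_smul, hpolpx]
        have hq2 : (∑ q ∈ Finset.univ.erase p, Q q • m q) = x := by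
          rw [← hμ]
          refine Finset.sum_congr rfl fun q hq => ?_
          rw [hQ]; dsimp only; rw [if_neg (Finset.mem_erase.mp hq).1, hpolval]
        rw [hq1, hq2, neg_add_cancel]
      have hQp := hkey Q hQsupp hQsum p
      rw [hQ] at hQp; dsimp only at hQp; rw [if_pos rfl] at hQp
      have hpolp0 : polp = 0 := by rwa [neg_eq_zero] at hQp
      rw [← hpolpx, hpolp0, zero_smul]
    · rw [eq_top_iff]
      have hint : (⨆ c, gr c) = ⊤ :=
        (DirectSum.Decomposition.isInternal gr).submodule_iSup_eq_top
      rw [← hint]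
      exact iSup_le fun c => aux_spanDeg hsmul g hM.1 _ _ m hm hcard hA c
end

section
/- Let M be a finitely generated ℤⁿ-graded R-module that is positively g-determined, and let 𝔉 be any Stanley decomposition of M. Then there exist a Hilbert partition 𝔓 of H_M(X)_{⪯g}, with induced Hilbert decomposition 𝔇(𝔓) : M ≅ ⊕_{i∈I} Rᵢ(−sᵢ), and nonzero homogeneous elements mᵢ ∈ M_{sᵢ} for i ∈ I, such that M = ⊕_{i∈I} mᵢRᵢ is a Stanley decomposition of M whose depth is at least the depth of 𝔉. -/
open MvPolynomial

/-!  Setting: `R = K[X₁,…,Xₙ]` with the `ℤⁿ`-grading `deg Xᵢ = eᵢ`.  A multigraded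
`R`-module is a module `M` over `MvPolynomial (Fin n) K` together with a family
`gr : (Fin n → ℤ) → Submodule K M` of `K`-subspaces forming a direct sum
decomposition of `M` (the class `DirectSum.Decomposition gr`) which is compatible
with the `R`-action (`GradedSMul gr`). -/

variable {K : Type*} [Field K] {n : ℕ} {M : Type*} [AddCommGroup M] [Module K M]
  [Module (MvPolynomial (Fin n) K) M] [IsScalarTower K (MvPolynomial (Fin n) K) M]

section AuxSD

variable {K : Type*} [Field K] {n : ℕ} {M : Type*} [AddCommGroup M] [Module K M]
  [Module (MvPolynomial (Fin n) K) M] [IsScalarTower K (MvPolynomial (Fin n) K) M]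

lemma sd_smul_comm (q : MvPolynomial (Fin n) K) (aa : K) (x : M) :
    q • aa • x = aa • q • x := by
  rw [← algebraMap_smul (MvPolynomial (Fin n) K) aa x, ← mul_smul, mul_comm, mul_smul,
    algebraMap_smul]

/-- scalar multiplication by a fixed polynomial as a `K`-linear map -/
noncomputable def sdSmulL (q : MvPolynomial (Fin n) K) : M →ₗ[K] M where
  toFun x := q • x
  map_add' x y := smul_add q x y
  map_smul' aa x := sd_smul_comm q aa x

@[simp] lemma sdSmulL_apply (q : MvPolynomial (Fin n) K) (x : M) : sdSmulL q x = q • x := rfl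

variable {gr : (Fin n → ℤ) → Submodule K M}

lemma sd_pow_smul_mem (hsmul : GradedSMul gr) (i : Fin n) (k : ℕ) :
    ∀ (aa : Fin n → ℤ), ∀ x ∈ gr aa,
      (X i ^ k : MvPolynomial (Fin n) K) • x ∈ gr (aa + k • Pi.single i 1) := by
  induction k with
  | zero => intro aa x hx; simpa using hx
  | succ k ih =>
    intro aa x hx
    have h2 := ih (aa + Pi.single i 1) _ (hsmul i aa x hx)
    have hidx : aa + (k+1) • Pi.single i 1 = aa + Pi.single i 1 + k • Pi.single i 1 := by
      funext j
      by_cases h : j = i <;> simp [h, Pi.single_apply] <;> ring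
    rw [pow_succ, mul_smul, hidx]
    exact h2

lemma sd_monomial_smul_mem (hsmul : GradedSMul gr) (t : Fin n →₀ ℕ) :
    ∀ (aa : Fin n → ℤ), ∀ x ∈ gr aa,
      (monomial t (1 : K)) • x ∈ gr (aa + fun j => ((t j : ℕ) : ℤ)) := by
  induction t using Finsupp.induction with
  | zero =>
    intro aa x hx
    have : (monomial (0 : Fin n →₀ ℕ) (1 : K)) = (1 : MvPolynomial (Fin n) K) := by
      simp [monomial_zero']
    have hidx : (aa + fun j => (((0 : Fin n →₀ ℕ) j : ℕ) : ℤ)) = aa := by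
      funext j; simp
    rw [this, one_smul, hidx]
    exact hx
  | single_add j k f hjf hk ih =>
    intro aa x hx
    have h1 := ih aa x hx
    have h2 := sd_pow_smul_mem hsmul j k _ _ h1
    have hidx : (aa + fun j' => (((Finsupp.single j k + f) j' : ℕ) : ℤ))
        = (aa + fun j' => ((f j' : ℕ) : ℤ)) + k • Pi.single j 1 := by
      funext j'
      rcases eq_or_ne j' j with h | h
      · subst h; simp [Pi.single_apply]; push_cast; ring
      · simp [Finsupp.single_apply, Pi.single_apply, h, Ne.symm h]
    rw [monomial_single_add, mul_smul, hidx]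
    exact h2

variable {g : Fin n → ℤ}

lemma sd_pow_smul_inj (hM : PosDetermined gr g) (hsmul : GradedSMul gr) (i : Fin n) (k : ℕ) :
    ∀ (aa : Fin n → ℤ), g i ≤ aa i → ∀ x ∈ gr aa,
      (X i ^ k : MvPolynomial (Fin n) K) • x = 0 → x = 0 := by
  induction k with
  | zero => intro aa _ x _ h; simpa using h
  | succ k ih =>
    intro aa hga x hx h
    rw [pow_succ, mul_smul] at h
    have h1 : (X i : MvPolynomial (Fin n) K) • x ∈ gr (aa + Pi.single i 1) := hsmul i aa x hx
    have h2 : (X i : MvPolynomial (Fin n) K) • x = 0 := by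
      refine ih (aa + Pi.single i 1) ?_ _ h1 h
      simp only [Pi.add_apply, Pi.single_eq_same]; omega
    exact (hM.2 i aa hga).1 x hx h2

lemma sd_monomial_smul_inj (hM : PosDetermined gr g) (hsmul : GradedSMul gr) (t : Fin n →₀ ℕ) :
    ∀ (aa : Fin n → ℤ), (∀ j, t j ≠ 0 → g j ≤ aa j) → ∀ x ∈ gr aa,
      (monomial t (1 : K)) • x = 0 → x = 0 := by
  induction t using Finsupp.induction with
  | zero =>
    intro aa _ x _ h
    have h1 : (monomial (0 : Fin n →₀ ℕ) (1 : K)) = (1 : MvPolynomial (Fin n) K) := by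
      simp [monomial_zero']
    rw [h1, one_smul] at h; exact h
  | single_add j k f hjf hk ih =>
    intro aa hcond x hx h
    rw [monomial_single_add, mul_smul] at h
    have hmem := sd_monomial_smul_mem hsmul f aa x hx
    have h2 : (monomial f (1 : K)) • x = 0 := by
      refine sd_pow_smul_inj hM hsmul j k _ ?_ _ hmem h
      have := hcond j (by simp [Finsupp.add_apply, Finsupp.single_apply]; omega)
      simp only [Pi.add_apply]
      have : (0:ℤ) ≤ ((f j : ℕ) : ℤ) := Int.ofNat_nonneg _
      omega
    refine ih aa (fun j' hj' => hcond j' ?_) x hx h2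
    simp only [Finsupp.add_apply]
    omega

lemma sd_pow_smul_surj (hM : PosDetermined gr g) (i : Fin n) (k : ℕ) :
    ∀ (aa : Fin n → ℤ), g i ≤ aa i → ∀ y ∈ gr (aa + k • Pi.single i 1),
      ∃ x ∈ gr aa, (X i ^ k : MvPolynomial (Fin n) K) • x = y := by
  induction k with
  | zero =>
    intro aa _ y hy
    refine ⟨y, by simpa using hy, by simp⟩
  | succ k ih =>
    intro aa hga y hy
    have hy' : y ∈ gr ((aa + Pi.single i 1) + k • Pi.single i 1) := by
      have hidx : (aa + Pi.single i 1) + k • Pi.single i 1 = aa + (k+1) • Pi.single i 1 := by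
        funext j; by_cases h : j = i <;> simp [h, Pi.single_apply] <;> ring
      rw [hidx]; exact hy
    obtain ⟨x₁, hx₁, hx₁e⟩ := ih (aa + Pi.single i 1) (by
      simp only [Pi.add_apply, Pi.single_eq_same]; omega) y hy'
    obtain ⟨x, hx, hxe⟩ := (hM.2 i aa hga).2 x₁ hx₁
    exact ⟨x, hx, by rw [pow_succ, mul_smul, hxe, hx₁e]⟩

lemma sd_monomial_smul_surj (hM : PosDetermined gr g) (hsmul : GradedSMul gr) (t : Fin n →₀ ℕ) :
    ∀ (aa : Fin n → ℤ), (∀ j, t j ≠ 0 → g j ≤ aa j) →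
      ∀ y ∈ gr (aa + fun j => ((t j : ℕ) : ℤ)),
      ∃ x ∈ gr aa, (monomial t (1 : K)) • x = y := by
  induction t using Finsupp.induction with
  | zero =>
    intro aa _ y hy
    refine ⟨y, ?_, ?_⟩
    · have hidx : aa = (aa + fun j => (((0 : Fin n →₀ ℕ) j : ℕ) : ℤ)) := by funext j; simp
      rw [hidx]; exact hy
    · have h1 : (monomial (0 : Fin n →₀ ℕ) (1 : K)) = (1 : MvPolynomial (Fin n) K) := by
        simp [monomial_zero']
      rw [h1, one_smul]
  | single_add j k f hjf hk ih =>
    intro aa hcond y hy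
    have hy' : y ∈ gr ((aa + fun j' => ((f j' : ℕ) : ℤ)) + k • Pi.single j 1) := by
      have hidx : (aa + fun j' => ((f j' : ℕ) : ℤ)) + k • Pi.single j 1
          = aa + fun j' => (((Finsupp.single j k + f) j' : ℕ) : ℤ) := by
        funext j'
        rcases eq_or_ne j' j with h | h
        · subst h; simp [Pi.single_apply]; push_cast; ring
        · simp [Finsupp.single_apply, Pi.single_apply, h, Ne.symm h]
      rw [hidx]; exact hy
    obtain ⟨x₁, hx₁, hx₁e⟩ := sd_pow_smul_surj hM j k _ (by
      have h0 : (0:ℤ) ≤ ((f j : ℕ) : ℤ) := Int.ofNat_nonneg _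
      have := hcond j (by simp [Finsupp.add_apply, Finsupp.single_apply]; omega)
      simp only [Pi.add_apply]; omega) y hy'
    obtain ⟨x, hx, hxe⟩ := ih aa (fun j' hj' => hcond j' (by
      simp only [Finsupp.add_apply]; omega)) x₁ hx₁
    refine ⟨x, hx, ?_⟩
    rw [monomial_single_add, mul_smul, hxe, hx₁e]

end AuxSD
section AuxSD2

variable {K : Type*} [Field K] {n : ℕ} {M : Type*} [AddCommGroup M] [Module K M]
  [Module (MvPolynomial (Fin n) K) M] [IsScalarTower K (MvPolynomial (Fin n) K) M]

omit [Module (MvPolynomial (Fin n) K) M] [IsScalarTower K (MvPolynomial (Fin n) K) M] in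
lemma sd_sum_zero {ι' : Type*} (N : ι' → Submodule K M) (hN : iSupIndep N) {A : Type*}
    (S : Finset A) (φ : A → ι') (hφ : Set.InjOn φ S) (x : A → M)
    (hx : ∀ a ∈ S, x a ∈ N (φ a)) (hsum : ∑ a ∈ S, x a = 0) : ∀ a ∈ S, x a = 0 := by
  classical
  intro a₀ ha₀
  have h1 : x a₀ = - ∑ a ∈ S.erase a₀, x a := by
    have h := Finset.sum_erase_add S x ha₀
    rw [hsum] at h
    exact eq_neg_of_add_eq_zero_right h
  have h2 : x a₀ ∈ ⨆ (j) (_ : j ≠ φ a₀), N j := by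
    rw [h1]
    refine neg_mem (Submodule.sum_mem _ fun a ha => ?_)
    have hane : φ a ≠ φ a₀ := fun hc =>
      (Finset.ne_of_mem_erase ha) (hφ (Finset.mem_of_mem_erase ha) ha₀ hc)
    exact Submodule.mem_iSup_of_mem (φ a) (Submodule.mem_iSup_of_mem hane
      (hx a (Finset.mem_of_mem_erase ha)))
  exact Submodule.disjoint_def.mp (hN (φ a₀)) _ (hx a₀ ha₀) h2

variable {gr : (Fin n → ℤ) → Submodule K M}

omit [Module (MvPolynomial (Fin n) K) M] [IsScalarTower K (MvPolynomial (Fin n) K) M] in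
lemma sd_graded_family [DirectSum.Decomposition gr] {P : Type*} (y : P → M)
    (δ : P → Fin n → ℤ) (hy : ∀ p, y p ∈ gr (δ p))
    (hind : ∀ (d : Fin n → ℤ) (S : Finset P) (coef : P → K), (∀ p ∈ S, δ p = d) →
      ∑ p ∈ S, coef p • y p = 0 → ∀ p ∈ S, coef p = 0)
    (hspan : ∀ d, gr d ≤ Submodule.span K (y '' {p | δ p = d})) :
    LinearIndependent K y ∧ Submodule.span K (Set.range y) = ⊤ := by
  classical
  constructor
  · rw [linearIndependent_iff']
    intro S coef hsum p₀ hp₀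
    set d := δ p₀ with hd
    let π : M →ₗ[K] M := (gr d).subtype ∘ₗ
      ((DFinsupp.lapply d : (DirectSum (Fin n → ℤ) fun i => ↥(gr i)) →ₗ[K] gr d) ∘ₗ
        (DirectSum.decomposeLinearEquiv gr).toLinearMap)
    have hπ : ∀ p : P, π (y p) = if δ p = d then y p else 0 := by
      intro p
      by_cases h : δ p = d
      · simp only [π, LinearMap.comp_apply, LinearEquiv.coe_toLinearMap,
          DirectSum.decomposeLinearEquiv_apply, DFinsupp.lapply_apply, Submodule.coe_subtype,
          if_pos h]
        exact DirectSum.decompose_of_mem_same gr (h ▸ hy p)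
      · simp only [π, LinearMap.comp_apply, LinearEquiv.coe_toLinearMap,
          DirectSum.decomposeLinearEquiv_apply, DFinsupp.lapply_apply, Submodule.coe_subtype,
          if_neg h]
        exact DirectSum.decompose_of_mem_ne gr (hy p) h
    have h2 : ∑ p ∈ S.filter (fun p => δ p = d), coef p • y p = 0 := by
      have h3 := congrArg π hsum
      rw [map_sum, map_zero] at h3
      rw [← h3, Finset.sum_filter]
      refine Finset.sum_congr rfl fun p _ => ?_
      rw [map_smul, hπ p]
      split_ifs <;> simp
    exact hind d _ coef (fun p hp => (Finset.mem_filter.mp hp).2) h2 p₀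
      (Finset.mem_filter.mpr ⟨hp₀, rfl⟩)
  · rw [eq_top_iff]
    intro x _
    rw [← DirectSum.sum_support_decompose gr x]
    refine Submodule.sum_mem _ fun d _ => ?_
    have h1 : ((DirectSum.decompose gr x) d : M) ∈ gr d := (DirectSum.decompose gr x d).2
    exact Submodule.span_mono (Set.image_subset_range y _) (hspan d h1)

end AuxSD2

/-- **Theorem.**  Let `M` be a finitely generated multigraded `R`-module, positively
`g`-determined, and let `𝔉 : M = ⊕_{i} m'ᵢ K[Z'ᵢ]` be any Stanley decomposition of
`M`.  Then there exist a Hilbert partition `𝔓 : H_M(X)_{⪯g} = Σᵢ Q[aⁱ,bⁱ](X)`, whose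
induced Hilbert decomposition is `𝔇(𝔓) : M ≅ ⊕_{p∈I} K[Z_{b^{p₁}}](−p₂)` with
`I = {(i,c) : c ∈ 𝓖[aⁱ,bⁱ]}`, and nonzero homogeneous elements `m_p ∈ M_{p₂}`, such
that `M = ⊕_{p∈I} m_p K[Z_{b^{p₁}}]` is a Stanley decomposition of `M` whose depth
(the minimum of the `|Z_{b^{p₁}}|`) is at least the depth `min_i |Z'ᵢ|` of `𝔉`. -/
theorem exists_stanleyDecomposition_from_hilbertPartition
    (gr : (Fin n → ℤ) → Submodule K M) [DirectSum.Decomposition gr]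
    (hsmul : GradedSMul gr) [Module.Finite (MvPolynomial (Fin n) K) M]
    (g : Fin n → ℤ) (hg : (0 : Fin n → ℤ) ≤ g)
    (hM : PosDetermined gr g)
    {ι : Type*} [Fintype ι] [Nonempty ι]
    (Z' : ι → Finset (Fin n)) (s' : ι → Fin n → ℤ) (m' : ι → M)
    (hF : IsStanleyDecomp gr Z' s' m') :
    ∃ (r : ℕ) (a b : Fin r → Fin n → ℤ),
      IsHilbertPartition gr g a b ∧
      ∃ m : (Σ i : Fin r, {w // w ∈ Gset g (a i) (b i)}) → M,
        (∀ p, m p ∈ gr (p.2 : Fin n → ℤ)) ∧ (∀ p, m p ≠ 0) ∧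
        IsStanleyDecomp gr (fun p => Zset g (b p.1)) (fun p => (p.2 : Fin n → ℤ)) m ∧
        ∀ p : (Σ i : Fin r, {w // w ∈ Gset g (a i) (b i)}),
          sInf {d | ∃ i : ι, d = (Z' i).card} ≤ (Zset g (b p.1)).card := by
  classical
  -- basic nonvanishing facts
  have hm'ne : ∀ i, m' i ≠ 0 := by
    intro i hmz
    have h := hF.2.1 i 1 (one_mem _) (by rw [hmz, smul_zero])
    exact one_ne_zero h
  have hs'0 : ∀ i, (0 : Fin n → ℤ) ≤ s' i := by
    intro i
    by_contra hc
    refine hm'ne i ?_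
    have h := hF.1 i
    rw [hM.1 (s' i) hc] at h
    simpa using h
  -- the exponent finsupp from degree `c` to degree `d`
  let tf : (Fin n → ℤ) → (Fin n → ℤ) → (Fin n →₀ ℕ) :=
    fun c d => Finsupp.equivFunOnFinite.symm fun j => (d j - c j).toNat
  have htf : ∀ c d j, tf c d j = (d j - c j).toNat := fun _ _ _ => rfl
  have hcast : ∀ (c d : Fin n → ℤ), c ≤ d →
      (c + fun j => ((tf c d j : ℕ) : ℤ)) = d := by
    intro c d hcd; funext j
    have h1 : c j ≤ d j := hcd j
    have h2 : ((tf c d j : ℕ) : ℤ) = d j - c j := by rw [htf c d j]; omega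
    simp only [Pi.add_apply, h2]
    omega
  -- the canonical homogeneous elements
  let uel : ι → (Fin n → ℤ) → M := fun i d => (monomial (tf (s' i) d) (1 : K)) • m' i
  -- enlarged variable sets
  let ZS : ι → Finset (Fin n) := fun i =>
    Finset.univ.filter fun j => (if j ∈ Z' i then g j else s' i j) = g j
  have hZ'ZS : ∀ i, Z' i ⊆ ZS i := by
    intro i j hj
    simp only [ZS, Finset.mem_filter, Finset.mem_univ, true_and, if_pos hj]
  -- degree conditions
  let oldP : ι → (Fin n → ℤ) → Prop := fun i d =>
    (∀ j, s' i j ≤ d j) ∧ ∀ j ∉ Z' i, d j = s' i j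
  -- basic properties of `uel`
  have huelmem : ∀ i d, (∀ j, s' i j ≤ d j) → uel i d ∈ gr d := by
    intro i d hle
    have h := sd_monomial_smul_mem hsmul (tf (s' i) d) (s' i) (m' i) (hF.1 i)
    rwa [hcast (s' i) d hle] at h
  have huelZ : ∀ i d, (∀ j ∉ Z' i, d j = s' i j) →
      (monomial (tf (s' i) d) (1 : K)) ∈ MvPolynomial.supported K (↑(Z' i) : Set (Fin n)) := by
    intro i d hd
    rw [MvPolynomial.mem_supported, vars_monomial one_ne_zero]
    intro j hj
    rw [Finset.mem_coe, Finsupp.mem_support_iff, htf] at hj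
    by_contra hjZ
    have := hd j hjZ
    omega
  have huelne : ∀ i d, (∀ j ∉ Z' i, d j = s' i j) → uel i d ≠ 0 := by
    intro i d hd hz
    exact one_ne_zero (monomial_eq_zero.mp (hF.2.1 i _ (huelZ i d hd) hz))
  let N : ι → Submodule K M := fun i => stanleySpace K (m' i) (Z' i)
  have huelN : ∀ i d, (∀ j ∉ Z' i, d j = s' i j) → uel i d ∈ N i := by
    intro i d hd
    refine Submodule.subset_span ⟨tf (s' i) d, ?_, rfl⟩
    intro j hj
    rw [htf, hd j hj]
    omega
  -- degree-wise projections
  let π : (Fin n → ℤ) → (M →ₗ[K] M) := fun d => (gr d).subtype ∘ₗ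
    ((DFinsupp.lapply d : (DirectSum (Fin n → ℤ) fun i => ↥(gr i)) →ₗ[K] gr d) ∘ₗ
      (DirectSum.decomposeLinearEquiv gr).toLinearMap)
  have hπ : ∀ (d e : Fin n → ℤ) (x : M), x ∈ gr e → π d x = if e = d then x else 0 := by
    intro d e x hx
    by_cases h : e = d
    · subst h
      simp only [π, LinearMap.comp_apply, LinearEquiv.coe_toLinearMap,
        DirectSum.decomposeLinearEquiv_apply, DFinsupp.lapply_apply, Submodule.coe_subtype,
        if_pos rfl]
      exact DirectSum.decompose_of_mem_same gr hx
    · simp only [π, LinearMap.comp_apply, LinearEquiv.coe_toLinearMap,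
        DirectSum.decomposeLinearEquiv_apply, DFinsupp.lapply_apply, Submodule.coe_subtype,
        if_neg h]
      exact DirectSum.decompose_of_mem_ne gr hx h
  -- the degree-`d` part of the old decomposition spans `gr d`
  have hOldSpan : ∀ d : Fin n → ℤ,
      gr d ≤ Submodule.span K {x | ∃ i, oldP i d ∧ x = uel i d} := by
    intro d x hx
    have hsup : (⨆ i, N i) = Submodule.span K (⋃ i,
        (fun t : Fin n →₀ ℕ => (monomial t (1 : K)) • m' i) ''
          {t : Fin n →₀ ℕ | ∀ j ∉ Z' i, t j = 0}) := (Submodule.span_iUnion _).symm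
    have hx2 : x ∈ Submodule.span K (⋃ i,
        (fun t : Fin n →₀ ℕ => (monomial t (1 : K)) • m' i) ''
          {t : Fin n →₀ ℕ | ∀ j ∉ Z' i, t j = 0}) := by
      rw [← hsup, hF.2.2.2]; trivial
    have hππ : π d x = x := by rw [hπ d d x hx, if_pos rfl]
    have hx3 : π d x ∈ Submodule.map (π d) (Submodule.span K _) :=
      Submodule.mem_map_of_mem hx2
    rw [Submodule.map_span] at hx3
    rw [← hππ]
    refine Submodule.span_le.mpr ?_ hx3
    rintro _ ⟨u, hu, rfl⟩
    simp only [Set.mem_iUnion] at hu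
    obtain ⟨i, t, ht, rfl⟩ := hu
    have humem := sd_monomial_smul_mem hsmul t (s' i) (m' i) (hF.1 i)
    by_cases hdeg : (s' i + fun j => ((t j : ℕ) : ℤ)) = d
    · rw [hπ d _ _ humem, if_pos hdeg]
      have htteq : t = tf (s' i) d := by
        ext j
        have h2 := congrFun hdeg j
        simp only [Pi.add_apply] at h2
        rw [htf]
        omega
      refine Submodule.subset_span ⟨i, ⟨?_, ?_⟩, ?_⟩
      · intro j
        have h2 := congrFun hdeg j
        simp only [Pi.add_apply] at h2
        omega
      · intro j hj
        have h2 := congrFun hdeg j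
        simp only [Pi.add_apply] at h2
        have h3 := ht j hj
        omega
      · exact congrArg (fun tt => (monomial tt (1 : K)) • m' i) htteq
    · rw [hπ d _ _ humem, if_neg hdeg]
      exact Submodule.zero_mem _
  -- Set up the Hilbert partition: one interval for each piece with `s' i ≤ g`
  let I' := {i : ι // s' i ≤ g}
  let r := Fintype.card I'
  let e : Fin r ≃ I' := (Fintype.equivFin I').symm
  let a : Fin r → Fin n → ℤ := fun k => s' (e k)
  let b : Fin r → Fin n → ℤ := fun k j => if j ∈ Z' (e k : ι) then g j else s' (e k : ι) j
  have hab : ∀ k, a k ≤ b k := by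
    intro k j
    simp only [a, b]
    split_ifs with h
    · exact (e k).2 j
    · exact le_refl _
  have hbg : ∀ k, b k ≤ g := by
    intro k j
    simp only [b]
    split_ifs with h
    · exact le_refl _
    · exact (e k).2 j
  have h0a : ∀ k, (0 : Fin n → ℤ) ≤ a k := fun k => hs'0 (e k)
  have hZb : ∀ k, Zset g (b k) = ZS (e k : ι) := by
    intro k
    ext j
    simp only [Zset, ZS, b, Finset.mem_filter, Finset.mem_univ, true_and]
  have hGset : ∀ k, Gset g (a k) (b k) = {a k} := by
    intro k
    ext c
    simp only [Gset, Finset.mem_filter, Finset.mem_Icc, Finset.mem_singleton]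
    constructor
    · rintro ⟨⟨hac, hcb⟩, hc⟩
      funext j
      by_cases hbj : b k j = g j
      · exact hc j hbj
      · have h1 : c j ≤ b k j := hcb j
        have h2 : a k j ≤ c j := hac j
        have h3 : b k j = a k j := by
          simp only [b, a]
          simp only [b] at hbj
          split_ifs with h
          · simp only [if_pos h] at hbj; exact absurd trivial hbj
          · rfl
        omega
    · rintro rfl
      exact ⟨⟨le_refl _, hab k⟩, fun j _ => rfl⟩
  refine ⟨r, a, b, ⟨fun k => ⟨h0a k, hab k, hbg k⟩, ?_⟩, ?_⟩
  · -- the count of intervals containing `c` is `dim M_c`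
    intro c h0c hcg
    let v : {i : ι // oldP i c} → M := fun i => uel (i : ι) c
    have hvli : LinearIndependent K v := by
      rw [linearIndependent_iff']
      intro S coef hsum i₀ hi₀
      have hz := sd_sum_zero N hF.2.2.1 S (fun i => (i : ι))
        (fun x _ y _ hxy => Subtype.ext hxy) (fun i => coef i • v i)
        (fun i _ => Submodule.smul_mem _ _ (huelN _ _ i.2.2)) hsum i₀ hi₀
      rcases smul_eq_zero.mp hz with h | h
      · exact h
      · exact absurd h (huelne _ _ i₀.2.2)
    have hvsp : gr c = Submodule.span K (Set.range v) := by
      apply le_antisymm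
      · refine le_trans (hOldSpan c) (Submodule.span_le.mpr ?_)
        rintro x ⟨i, hi, rfl⟩
        exact Submodule.subset_span ⟨⟨i, hi⟩, rfl⟩
      · rw [Submodule.span_le]
        rintro x ⟨i, rfl⟩
        exact huelmem (i : ι) c i.2.1
    have hrank : Module.rank K ↥(gr c) = Fintype.card {i : ι // oldP i c} := by
      have hb := Module.Basis.span hvli
      have h2 := rank_eq_card_basis hb
      rw [hvsp]
      exact h2
    rw [hrank]
    have hcards : Fintype.card {i : ι // oldP i c}
        = (Finset.univ.filter fun i : ι => oldP i c).card := Fintype.card_subtype _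
    have hcount : ((Finset.univ : Finset (Fin r)).filter
          fun k => (∀ j, a k j ≤ c j) ∧ (∀ j, c j ≤ b k j)).card
        = (Finset.univ.filter fun i : ι => oldP i c).card := by
      refine Finset.card_bij (fun k _ => (e k : ι)) ?_ ?_ ?_
      · intro k hk
        simp only [Finset.mem_filter, Finset.mem_univ, true_and] at hk ⊢
        obtain ⟨h1, h2⟩ := hk
        refine ⟨h1, fun j hj => ?_⟩
        have h3 := h2 j
        have h4 : b k j = s' (e k : ι) j := by simp only [b, if_neg hj]
        have h5 := h1 j
        simp only [a] at h5
        omega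
      · intro k1 hk1 k2 hk2 hkk
        exact e.injective (Subtype.ext hkk)
      · intro i hi
        simp only [Finset.mem_filter, Finset.mem_univ, true_and] at hi
        have hig : s' i ≤ g := fun j => le_trans (hi.1 j) (hcg j)
        have hek : ((e (e.symm ⟨i, hig⟩)) : ι) = i := by
          rw [Equiv.apply_symm_apply]
        refine ⟨e.symm ⟨i, hig⟩, Finset.mem_filter.mpr ⟨Finset.mem_univ _, ?_, ?_⟩, hek⟩
        · intro j
          simp only [a, hek]
          exact hi.1 j
        · intro j
          simp only [b, hek]
          split_ifs with h
          · exact hcg j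
          · exact le_of_eq (hi.2 j h)
    exact_mod_cast hcards.trans hcount.symm
  · -- the Stanley decomposition induced by the Hilbert partition
    have hP2 : ∀ p : (Σ k : Fin r, {w // w ∈ Gset g (a k) (b k)}),
        (p.2 : Fin n → ℤ) = s' (e p.1 : ι) := by
      intro p
      have h : (p.2 : Fin n → ℤ) ∈ ({a p.1} : Finset (Fin n → ℤ)) := by
        rw [← hGset p.1]
        exact p.2.2
      exact Finset.mem_singleton.mp h
    -- the full family of monomial multiples, indexed over a sigma type
    let Q := Σ p : (Σ k : Fin r, {w // w ∈ Gset g (a k) (b k)}),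
        {t : Fin n →₀ ℕ // ∀ j ∉ Zset g (b p.1), t j = 0}
    let y : Q → M := fun q => (monomial q.2.1 (1 : K)) • m' (e q.1.1 : ι)
    let δ : Q → Fin n → ℤ := fun q => s' (e q.1.1 : ι) + fun j => ((q.2.1 j : ℕ) : ℤ)
    have hyq : ∀ q, y q ∈ gr (δ q) := fun q =>
      sd_monomial_smul_mem hsmul q.2.1 _ _ (hF.1 _)
    have hfact : ∀ (i : ι) (cc dd : Fin n → ℤ), s' i ≤ cc → cc ≤ dd →
        uel i dd = (monomial (tf cc dd) (1 : K)) • uel i cc := by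
      intro i cc dd h1 h2
      show (monomial (tf (s' i) dd) (1 : K)) • m' i = _
      rw [smul_smul, monomial_mul, one_mul]
      have h5 : tf (s' i) dd = tf cc dd + tf (s' i) cc := by
        ext j
        have h3 : s' i j ≤ cc j := h1 j
        have h4 : cc j ≤ dd j := h2 j
        simp only [Finsupp.add_apply, htf]
        omega
      rw [h5]
    have hQinj : ∀ (d : Fin n → ℤ) (q q' : Q), δ q = d → δ q' = d →
        (e q.1.1 : ι) = (e q'.1.1 : ι) → q = q' := by
      intro d q q' hq hq' hee
      obtain ⟨⟨k, w, hw⟩, t, ht⟩ := q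
      obtain ⟨⟨k', w', hw'⟩, t', ht'⟩ := q'
      simp only at hee
      have hkk : k = k' := e.injective (Subtype.ext hee)
      subst hkk
      have hww : w = w' := by
        rw [hGset k, Finset.mem_singleton] at hw hw'
        rw [hw, hw']
      subst hww
      have htt : t = t' := by
        ext j
        have h1 := congrFun (hq.trans hq'.symm) j
        simp only [δ, Pi.add_apply] at h1
        omega
      subst htt
      rfl
    have hnewold : ∀ q : Q, ∀ d, δ q = d →
        oldP (e q.1.1 : ι) (fun j => min (d j) (g j)) := by
      intro q d hd
      have hig : s' (e q.1.1 : ι) ≤ g := (e q.1.1).2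
      constructor
      · intro j
        have h1 : s' (e q.1.1 : ι) j ≤ g j := hig j
        have h2 := congrFun hd j
        simp only [δ, Pi.add_apply] at h2
        have h3 : (0 : ℤ) ≤ ((q.2.1 j : ℕ) : ℤ) := Int.ofNat_nonneg _
        show s' (e q.1.1 : ι) j ≤ min (d j) (g j)
        omega
      · intro j hj
        show min (d j) (g j) = s' (e q.1.1 : ι) j
        by_cases hjZS : j ∈ ZS (e q.1.1 : ι)
        · have h1 : (if j ∈ Z' (e q.1.1 : ι) then g j else s' (e q.1.1 : ι) j) = g j :=
            (Finset.mem_filter.mp hjZS).2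
          rw [if_neg hj] at h1
          have h2 := congrFun hd j
          simp only [δ, Pi.add_apply] at h2
          have h3 : (0 : ℤ) ≤ ((q.2.1 j : ℕ) : ℤ) := Int.ofNat_nonneg _
          omega
        · have ht0 : q.2.1 j = 0 := q.2.2 j (by rw [hZb q.1.1]; exact hjZS)
          have h2 := congrFun hd j
          simp only [δ, Pi.add_apply, ht0] at h2
          have h1 : s' (e q.1.1 : ι) j ≤ g j := hig j
          simp only [Nat.cast_zero, add_zero] at h2
          omega
    have hindQ : ∀ (d : Fin n → ℤ) (S : Finset Q) (coef : Q → K), (∀ q ∈ S, δ q = d) →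
        ∑ q ∈ S, coef q • y q = 0 → ∀ q ∈ S, coef q = 0 := by
      intro d S coef hdS hsum q₀ hq₀
      set c : Fin n → ℤ := fun j => min (d j) (g j) with hc
      have hcd : c ≤ d := fun j => min_le_left _ _
      have hold : ∀ q ∈ S, oldP (e q.1.1 : ι) c := fun q hq => hnewold q d (hdS q hq)
      have hyuel : ∀ q ∈ S, y q = uel (e q.1.1 : ι) d := by
        intro q hq
        have htq : q.2.1 = tf (s' (e q.1.1 : ι)) d := by
          ext j
          have h1 := congrFun (hdS q hq) j
          simp only [δ, Pi.add_apply] at h1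
          rw [htf]
          omega
        show (monomial q.2.1 (1 : K)) • m' (e q.1.1 : ι) = _
        rw [htq]
      have hsum2 : (monomial (tf c d) (1 : K)) •
          (∑ q ∈ S, coef q • uel (e q.1.1 : ι) c) = 0 := by
        have heach : ∀ q ∈ S, coef q • y q
            = (monomial (tf c d) (1 : K)) • (coef q • uel (e q.1.1 : ι) c) := by
          intro q hq
          rw [sd_smul_comm, ← hfact _ c d (hold q hq).1 hcd, ← hyuel q hq]
        rw [Finset.smul_sum, ← Finset.sum_congr rfl heach]
        exact hsum
      have hin : (∑ q ∈ S, coef q • uel (e q.1.1 : ι) c) ∈ gr c :=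
        Submodule.sum_mem _ fun q hq => Submodule.smul_mem _ _ (huelmem _ _ (hold q hq).1)
      have hz := sd_monomial_smul_inj hM hsmul (tf c d) c (fun j hj => by
          rw [htf] at hj
          have hcj : c j = min (d j) (g j) := rfl
          rw [hcj] at hj ⊢
          omega) _ hin hsum2
      have hz2 := sd_sum_zero N hF.2.2.1 S (fun q => (e q.1.1 : ι))
        (fun x hx y' hy' hxy => hQinj d x y' (hdS x (Finset.mem_coe.mp hx))
          (hdS y' (Finset.mem_coe.mp hy')) hxy)
        (fun q => coef q • uel (e q.1.1 : ι) c)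
        (fun q hq => Submodule.smul_mem _ _ (huelN _ _ (hold q hq).2)) hz q₀ hq₀
      rcases smul_eq_zero.mp hz2 with h | h
      · exact h
      · exact absurd h (huelne _ _ (hold q₀ hq₀).2)
    have hspanQ : ∀ d, gr d ≤ Submodule.span K (y '' {q | δ q = d}) := by
      intro d x hx
      by_cases h0d : (0 : Fin n → ℤ) ≤ d
      · set c : Fin n → ℤ := fun j => min (d j) (g j) with hc
        have hcd : c ≤ d := fun j => min_le_left _ _
        have hgood : ∀ j, tf c d j ≠ 0 → g j ≤ c j := by
          intro j hj
          rw [htf] at hj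
          have hcj : c j = min (d j) (g j) := rfl
          rw [hcj] at hj ⊢
          omega
        obtain ⟨x₀, hx₀, hx₀e⟩ := sd_monomial_smul_surj hM hsmul (tf c d) c hgood x
          (by rw [hcast c d hcd]; exact hx)
        have hx₀sp := hOldSpan c hx₀
        have hx2 : (sdSmulL (monomial (tf c d) (1 : K)) : M →ₗ[K] M) x₀ ∈
            Submodule.map (sdSmulL (monomial (tf c d) (1 : K)) : M →ₗ[K] M)
              (Submodule.span K {x | ∃ i, oldP i c ∧ x = uel i c}) :=
          Submodule.mem_map_of_mem hx₀sp
        rw [Submodule.map_span] at hx2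
        have himg : (sdSmulL (monomial (tf c d) (1 : K)) : M →ₗ[K] M) ''
            {x | ∃ i, oldP i c ∧ x = uel i c}
            ⊆ ↑(Submodule.span K (y '' {q | δ q = d})) := by
          rintro _ ⟨u, ⟨i, hi, rfl⟩, rfl⟩
          have hig : s' i ≤ g := fun j => le_trans (hi.1 j) (min_le_right _ _)
          have hul : (sdSmulL (monomial (tf c d) (1 : K)) : M →ₗ[K] M) (uel i c)
              = uel i d := by
            rw [sdSmulL_apply, ← hfact i c d hi.1 hcd]
          rw [hul]
          have hek : ((e (e.symm ⟨i, hig⟩)) : ι) = i := by rw [Equiv.apply_symm_apply]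
          have hwmem : a (e.symm ⟨i, hig⟩)
              ∈ Gset g (a (e.symm ⟨i, hig⟩)) (b (e.symm ⟨i, hig⟩)) := by
            rw [hGset]
            exact Finset.mem_singleton_self _
          have htmem : ∀ j ∉ Zset g (b (e.symm ⟨i, hig⟩)), tf (s' i) d j = 0 := by
            intro j hj
            rw [hZb, hek] at hj
            simp only [ZS, Finset.mem_filter, Finset.mem_univ, true_and] at hj
            by_cases hjz : j ∈ Z' i
            · rw [if_pos hjz] at hj
              exact absurd rfl hj
            · rw [if_neg hjz] at hj
              have h2 := hi.2 j hjz
              have h3 : c j = min (d j) (g j) := rfl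
              have h4 : s' i j ≤ g j := hig j
              rw [htf]
              omega
          refine Submodule.subset_span
            ⟨⟨⟨e.symm ⟨i, hig⟩, ⟨a _, hwmem⟩⟩, ⟨tf (s' i) d, htmem⟩⟩, ?_, ?_⟩
          · show (s' (e (e.symm ⟨i, hig⟩) : ι) + fun j => ((tf (s' i) d j : ℕ) : ℤ)) = d
            rw [hek]
            exact hcast (s' i) d (fun j => le_trans (hi.1 j) (hcd j))
          · show (monomial (tf (s' i) d) (1 : K)) • m' (e (e.symm ⟨i, hig⟩) : ι) = uel i d
            rw [hek]
        refine Submodule.span_le.mpr himg ?_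
        rw [← hx₀e]
        exact hx2
      · rw [hM.1 d h0d] at hx
        simp only [Submodule.mem_bot] at hx
        rw [hx]
        exact Submodule.zero_mem _
    obtain ⟨hLI, hSP⟩ := sd_graded_family (gr := gr) y δ hyq hindQ hspanQ
    have hN'span : ∀ p : (Σ k : Fin r, {w // w ∈ Gset g (a k) (b k)}),
        stanleySpace K (m' (e p.1 : ι)) (Zset g (b p.1))
          = Submodule.span K (y '' {q : Q | q.1 = p}) := by
      intro p
      unfold stanleySpace
      congr 1
      ext x
      constructor
      · rintro ⟨t, ht, rfl⟩
        exact ⟨⟨p, ⟨t, ht⟩⟩, rfl, rfl⟩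
      · rintro ⟨⟨p', t⟩, hp', rfl⟩
        have hp'' : p' = p := hp'
        subst hp''
        exact ⟨t.1, t.2, rfl⟩
    refine ⟨fun p => m' (e p.1 : ι), ?_, fun p => hm'ne _, ⟨?_, ?_, ?_, ?_⟩, ?_⟩
    · intro p
      show m' (e p.1 : ι) ∈ gr (p.2 : Fin n → ℤ)
      rw [hP2 p]
      exact hF.1 _
    · intro p
      show m' (e p.1 : ι) ∈ gr (p.2 : Fin n → ℤ)
      rw [hP2 p]
      exact hF.1 _
    · -- freeness over the enlarged polynomial subalgebras
      intro p q hq hq0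
      have hsupp : ∀ t : {t // t ∈ q.support}, ∀ j ∉ Zset g (b p.1),
          (t : Fin n →₀ ℕ) j = 0 := by
        intro t j hj
        by_contra h0
        have hjt : j ∈ (t : Fin n →₀ ℕ).support := Finsupp.mem_support_iff.mpr h0
        have hjv : j ∈ q.vars := (MvPolynomial.mem_vars j).mpr ⟨t.1, t.2, hjt⟩
        exact hj (MvPolynomial.mem_supported.mp hq hjv)
      let emb : {t // t ∈ q.support} ↪ Q :=
        ⟨fun t => ⟨p, ⟨t.1, hsupp t⟩⟩, fun t1 t2 h =>
          Subtype.ext (congrArg (fun q' : Q => q'.2.1) h)⟩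
      let S : Finset Q := q.support.attach.map emb
      have hsum : ∑ q' ∈ S, (MvPolynomial.coeff q'.2.1 q) • y q'
          = q • m' (e p.1 : ι) := by
        rw [Finset.sum_map]
        have heach : ∀ t ∈ q.support.attach,
            (MvPolynomial.coeff (emb t).2.1 q) • y (emb t)
            = (monomial t.1 (MvPolynomial.coeff t.1 q)) • m' (e p.1 : ι) := by
          intro t _
          show (MvPolynomial.coeff t.1 q) • ((monomial t.1 (1 : K)) • m' (e p.1 : ι)) = _
          rw [← smul_assoc, MvPolynomial.smul_monomial, smul_eq_mul, mul_one]
        rw [Finset.sum_congr rfl heach,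
          Finset.sum_attach q.support
            (fun t => (monomial t (MvPolynomial.coeff t q)) • m' (e p.1 : ι)),
          ← Finset.sum_smul, MvPolynomial.support_sum_monomial_coeff]
      have hz := linearIndependent_iff'.mp hLI S (fun q' => MvPolynomial.coeff q'.2.1 q)
        (by rw [hsum]; exact hq0)
      rw [← MvPolynomial.support_eq_empty]
      by_contra hqne
      obtain ⟨t, ht⟩ := Finset.nonempty_iff_ne_empty.mpr hqne
      have hco := hz (emb ⟨t, ht⟩)
        (Finset.mem_map_of_mem emb (Finset.mem_attach _ ⟨t, ht⟩))
      exact (MvPolynomial.mem_support_iff.mp ht) hco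
    · -- independence of the pieces
      intro p
      beta_reduce
      have hle : (⨆ p', ⨆ (_ : p' ≠ p),
            stanleySpace K (m' (e p'.1 : ι)) (Zset g (b p'.1)))
          ≤ Submodule.span K (y '' {q : Q | q.1 ≠ p}) := by
        refine iSup_le fun p' => iSup_le fun hp' => ?_
        rw [hN'span p']
        refine Submodule.span_mono (Set.image_mono ?_)
        intro q hq
        have hq' : q.1 = p' := hq
        rw [Set.mem_setOf_eq, hq']
        exact hp'
      refine Disjoint.mono_right hle ?_
      rw [hN'span p]
      refine hLI.disjoint_span_image ?_
      rw [Set.disjoint_left]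
      intro q hq1 hq2
      exact hq2 hq1
    · -- the pieces fill out `M`
      apply le_antisymm le_top
      rw [← hSP]
      refine Submodule.span_le.mpr ?_
      rintro x ⟨q, rfl⟩
      refine Submodule.mem_iSup_of_mem q.1 ?_
      rw [hN'span q.1]
      exact Submodule.subset_span ⟨q, rfl, rfl⟩
    · -- the depth bound
      intro p
      refine le_trans (Nat.sInf_le ⟨(e p.1 : ι), rfl⟩) ?_
      refine Finset.card_le_card ?_
      rw [hZb p.1]
      exact hZ'ZS _
end

section
/- Let M be a finitely generated ℤⁿ-graded R-module that is positively g-determined and satisfies dim_K M_a ≤ 1 for all a ∈ ℤⁿ. Let M ≅ ⊕_{i∈I} Rᵢ(−sᵢ) be a Hilbert decomposition of M with sᵢ ⪯ g, and suppose that Rᵢ ∩ Ann(M_{sᵢ}) = 0 for every i ∈ I. Then for any choice of nonzero elements mᵢ ∈ M_{sᵢ}, the decomposition M = ⊕_{i∈I} mᵢRᵢ is a Stanley decomposition of M (as multigraded R-modules), and each mᵢRᵢ equals Rᵢ(−sᵢ) as a multigraded K-vector space. -/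
open MvPolynomial

/-!  Setting: `R = K[X₁,…,Xₙ]` with the `ℤⁿ`-grading `deg Xᵢ = eᵢ`.  A multigraded
`R`-module is a module `M` over `MvPolynomial (Fin n) K` together with a family
`gr : (Fin n → ℤ) → Submodule K M` of `K`-subspaces forming a direct sum
decomposition of `M` (the class `DirectSum.Decomposition gr`) which is compatible
with the `R`-action (`GradedSMul gr`). -/

variable {K : Type*} [Field K] {n : ℕ} {M : Type*} [AddCommGroup M] [Module K M]
  [Module (MvPolynomial (Fin n) K) M] [IsScalarTower K (MvPolynomial (Fin n) K) M]

lemma X_pow_smul_mem {gr : (Fin n → ℤ) → Submodule K M} (hsmul : GradedSMul gr)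
    (i : Fin n) (b : ℕ) {a : Fin n → ℤ} {x : M} (hx : x ∈ gr a) :
    ((MvPolynomial.X i : MvPolynomial (Fin n) K) ^ b) • x
      ∈ gr (a + fun j => ((Finsupp.single i b : Fin n →₀ ℕ) j : ℤ)) := by
  induction b with
  | zero =>
      have e : (a + fun j => ((Finsupp.single i 0 : Fin n →₀ ℕ) j : ℤ)) = a := by
        funext j; simp
      rw [e]; simpa using hx
  | succ b ih =>
      have h1 := hsmul i _ _ ih
      have : (a + fun j => ((Finsupp.single i b : Fin n →₀ ℕ) j : ℤ)) + Pi.single i 1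
          = a + fun j => ((Finsupp.single i (b+1) : Fin n →₀ ℕ) j : ℤ) := by
        funext j
        by_cases h : j = i
        · subst h; simp [Finsupp.single_apply]; push_cast; ring
        · simp [Finsupp.single_apply, Ne.symm h, Pi.single_apply, h]
      rw [this] at h1
      rw [pow_succ, mul_comm, mul_smul]
      exact h1

lemma monomial_smul_mem {gr : (Fin n → ℤ) → Submodule K M} (hsmul : GradedSMul gr)
    (t : Fin n →₀ ℕ) {a : Fin n → ℤ} {x : M} (hx : x ∈ gr a) :
    (MvPolynomial.monomial t (1 : K)) • x ∈ gr (a + fun j => (t j : ℤ)) := by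
  induction t using Finsupp.induction generalizing a x with
  | zero =>
      have e : (a + fun j => (((0 : Fin n →₀ ℕ) j : ℕ) : ℤ)) = a := by
        funext j; simp
      rw [e]; simpa using hx
  | single_add i b f hi hb ih =>
      have h2 := ih hx
      have h3 := X_pow_smul_mem hsmul i b h2
      have hmon : (MvPolynomial.monomial (Finsupp.single i b + f) (1 : K))
          = (MvPolynomial.X i : MvPolynomial (Fin n) K) ^ b * MvPolynomial.monomial f 1 := by
        rw [MvPolynomial.X_pow_eq_monomial, MvPolynomial.monomial_mul, one_mul]
      have hdeg : ((a + fun j => (f j : ℤ)) + fun j => ((Finsupp.single i b : Fin n →₀ ℕ) j : ℤ))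
          = a + fun j => (((Finsupp.single i b + f) j : ℕ) : ℤ) := by
        funext j
        simp [Finsupp.add_apply]
        push_cast
        ring
      rw [hmon, mul_smul]
      rw [hdeg] at h3
      exact h3

noncomputable def projc (gr : (Fin n → ℤ) → Submodule K M) [DirectSum.Decomposition gr]
    (c : Fin n → ℤ) : M →ₗ[K] M :=
  ((gr c).subtype.comp (DirectSum.component K (Fin n → ℤ) (fun d => ↥(gr d)) c)).comp
    (DirectSum.decomposeLinearEquiv gr).toLinearMap

lemma projc_apply (gr : (Fin n → ℤ) → Submodule K M) [DirectSum.Decomposition gr]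
    (c : Fin n → ℤ) (x : M) : projc gr c x = ↑(DirectSum.decompose gr x c) := rfl

lemma projc_mem (gr : (Fin n → ℤ) → Submodule K M) [DirectSum.Decomposition gr]
    (c : Fin n → ℤ) (x : M) : projc gr c x ∈ gr c := (DirectSum.decompose gr x c).2

lemma projc_of_mem_same (gr : (Fin n → ℤ) → Submodule K M) [DirectSum.Decomposition gr]
    {c : Fin n → ℤ} {x : M} (hx : x ∈ gr c) : projc gr c x = x :=
  DirectSum.decompose_of_mem_same gr hx

lemma projc_of_mem_ne (gr : (Fin n → ℤ) → Submodule K M) [DirectSum.Decomposition gr]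
    {a c : Fin n → ℤ} {x : M} (hx : x ∈ gr a) (h : a ≠ c) : projc gr c x = 0 :=
  DirectSum.decompose_of_mem_ne gr hx h

lemma eq_zero_of_projc (gr : (Fin n → ℤ) → Submodule K M) [DirectSum.Decomposition gr]
    (x : M) (h : ∀ c, projc gr c x = 0) : x = 0 := by
  classical
  rw [← DirectSum.sum_support_decompose gr x]
  exact Finset.sum_eq_zero fun c _ => h c

/-- **Corollary.**  Assume the finitely generated multigraded `R`-module `M` is
positively `g`-determined and `dim_K M_c ≤ 1` for all `c ∈ ℤⁿ`.  Let
`M ≅ ⊕_{i∈I} K[Zᵢ](−sᵢ)` be a Hilbert decomposition of `M` with `sᵢ ⪯ g` and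
`K[Zᵢ] ∩ Ann(M_{sᵢ}) = 0` for every `i ∈ I`.  Then for every choice of nonzero
elements `mᵢ ∈ M_{sᵢ}` the decomposition `M = ⊕_{i∈I} mᵢK[Zᵢ]` is a Stanley
decomposition of `M`, and each `mᵢK[Zᵢ]` equals `K[Zᵢ](−sᵢ)` as a multigraded
`K`-vector space (its degree-`c` component is one-dimensional if `sᵢ ⪯ c` and
`c_j = (sᵢ)_j` for all `j ∉ Zᵢ`, and zero otherwise). -/
theorem stanley_of_hilbert_of_rank_le_one
    (gr : (Fin n → ℤ) → Submodule K M) [DirectSum.Decomposition gr]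
    (hsmul : GradedSMul gr) [Module.Finite (MvPolynomial (Fin n) K) M]
    (g : Fin n → ℤ) (hg : (0 : Fin n → ℤ) ≤ g)
    (hM : PosDetermined gr g)
    (hrank : ∀ c : Fin n → ℤ, Module.rank K ↥(gr c) ≤ 1)
    {ι : Type*} [Fintype ι]
    (Z : ι → Finset (Fin n)) (s : ι → Fin n → ℤ)
    (hD : IsHilbertDecomp gr Z s) (hs : ∀ i, s i ≤ g)
    (hann : ∀ i, ∀ q ∈ MvPolynomial.supported K (↑(Z i) : Set (Fin n)),
      (∀ x ∈ gr (s i), q • x = 0) → q = 0)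
    (m : ι → M) (hm : ∀ i, m i ∈ gr (s i)) (hm0 : ∀ i, m i ≠ 0) :
    IsStanleyDecomp gr Z s m ∧
      ∀ (i : ι) (c : Fin n → ℤ),
        Module.rank K ↥(stanleySpace K (m i) (Z i) ⊓ gr c)
          = if (∀ j, s i j ≤ c j) ∧ (∀ j, j ∉ Z i → c j = s i j) then 1 else 0 := by
  classical
  -- every element of a rank <= 1 component is a K-multiple of a nonzero element
  have hmult : ∀ (c : Fin n → ℤ) (e : M), e ∈ gr c → e ≠ 0 → ∀ x ∈ gr c, ∃ k : K, x = k • e := by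
    intro c e he he0 x hx
    obtain ⟨v₀, hv₀⟩ := rank_le_one_iff.mp (hrank c)
    obtain ⟨r, hr⟩ := hv₀ ⟨e, he⟩
    obtain ⟨r', hr'⟩ := hv₀ ⟨x, hx⟩
    have hre : r • (v₀ : M) = e := congrArg Subtype.val hr
    have hrx : r' • (v₀ : M) = x := congrArg Subtype.val hr'
    have hr0 : r ≠ 0 := by
      rintro rfl; exact he0 (by rw [← hre, zero_smul])
    refine ⟨r' * r⁻¹, ?_⟩
    rw [← hrx, ← hre, smul_smul, mul_assoc, inv_mul_cancel₀ hr0, mul_one]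
  have hcomm : ∀ (q : MvPolynomial (Fin n) K) (k : K) (x : M), q • (k • x) = k • (q • x) := by
    intro q k x
    rw [← algebraMap_smul (MvPolynomial (Fin n) K) k x, ← mul_smul, mul_comm, mul_smul,
      algebraMap_smul]
  have hannm : ∀ i, ∀ q ∈ MvPolynomial.supported K (↑(Z i) : Set (Fin n)),
      q • m i = 0 → q = 0 := by
    intro i q hq h0
    refine hann i q hq fun x hx => ?_
    obtain ⟨k, rfl⟩ := hmult (s i) (m i) (hm i) (hm0 i) x hx
    rw [hcomm, h0, smul_zero]
  have hmonsupp : ∀ i (t : Fin n →₀ ℕ), (∀ j ∉ Z i, t j = 0) →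
      (MvPolynomial.monomial t (1 : K)) ∈
        MvPolynomial.supported K (↑(Z i) : Set (Fin n)) := by
    intro i t ht
    rw [MvPolynomial.mem_supported, MvPolynomial.vars_monomial one_ne_zero]
    intro j hj
    have hj' := Finsupp.mem_support_iff.mp hj
    by_contra hjz
    exact hj' (ht j (by simpa using hjz))
  have hgen0 : ∀ i (t : Fin n →₀ ℕ), (∀ j ∉ Z i, t j = 0) →
      (MvPolynomial.monomial t (1 : K)) • m i ≠ 0 := by
    intro i t ht h0
    have := hannm i _ (hmonsupp i t ht) h0
    rw [MvPolynomial.monomial_eq_zero] at this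
    exact one_ne_zero this
  -- admissibility
  have hAdm : ∀ (i : ι) (c : Fin n → ℤ),
      ((∀ j, s i j ≤ c j) ∧ (∀ j, j ∉ Z i → c j = s i j)) ↔
        ∃ t : Fin n →₀ ℕ, (∀ j ∉ Z i, t j = 0) ∧ (s i + fun j => ((t j : ℕ) : ℤ)) = c := by
    intro i c
    constructor
    · rintro ⟨h1, h2⟩
      refine ⟨Finsupp.equivFunOnFinite.symm fun j => (c j - s i j).toNat, ?_, ?_⟩
      · intro j hj
        simp [Finsupp.coe_equivFunOnFinite_symm, h2 j hj]
      · funext j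
        simp only [Pi.add_apply, Finsupp.coe_equivFunOnFinite_symm]
        rw [Int.toNat_of_nonneg (by have := h1 j; omega : (0:ℤ) ≤ c j - s i j)]
        ring
    · rintro ⟨t, ht, rfl⟩
      refine ⟨fun j => by simp, fun j hj => by simp [ht j hj]⟩
  have huniq : ∀ (c : Fin n → ℤ) (i j : ι),
      ((∀ k, s i k ≤ c k) ∧ (∀ k, k ∉ Z i → c k = s i k)) →
      ((∀ k, s j k ≤ c k) ∧ (∀ k, k ∉ Z j → c k = s j k)) → i = j := by
    intro c i j hi hj
    have h1 : (((Finset.univ : Finset ι).filter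
        fun i => (∀ j, s i j ≤ c j) ∧ (∀ j, j ∉ Z i → c j = s i j)).card : Cardinal) ≤ 1 := by
      rw [← hD c]; exact hrank c
    have h2 : ((Finset.univ : Finset ι).filter
        fun i => (∀ j, s i j ≤ c j) ∧ (∀ j, j ∉ Z i → c j = s i j)).card ≤ 1 := by
      exact_mod_cast h1
    exact Finset.card_le_one.mp h2 i (Finset.mem_filter.mpr ⟨Finset.mem_univ i, hi⟩) j (Finset.mem_filter.mpr ⟨Finset.mem_univ j, hj⟩)
  have hex : ∀ c : Fin n → ℤ, gr c ≠ ⊥ →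
      ∃ i : ι, (∀ j, s i j ≤ c j) ∧ (∀ j, j ∉ Z i → c j = s i j) := by
    intro c hc
    have h0 : Module.rank K ↥(gr c) ≠ 0 := fun h => hc (Submodule.rank_eq_zero.mp h)
    rw [hD c] at h0
    have hne : ((Finset.univ : Finset ι).filter
        fun i => (∀ j, s i j ≤ c j) ∧ (∀ j, j ∉ Z i → c j = s i j)).Nonempty := by
      rw [Finset.nonempty_iff_ne_empty]
      intro h; rw [h] at h0; simp at h0
    obtain ⟨i, hi⟩ := hne
    exact ⟨i, (Finset.mem_filter.mp hi).2⟩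
  -- projection facts
  have hmaple : ∀ (i : ι) (c : Fin n → ℤ),
      Submodule.map (projc gr c) (stanleySpace K (m i) (Z i)) ≤
        stanleySpace K (m i) (Z i) ⊓ gr c := by
    intro i c
    rw [stanleySpace, Submodule.map_span, Submodule.span_le]
    rintro y ⟨y', ⟨t, ht, rfl⟩, rfl⟩
    by_cases hc : (s i + fun j => ((t j : ℕ) : ℤ)) = c
    · rw [SetLike.mem_coe, projc_of_mem_same gr (hc ▸ monomial_smul_mem hsmul t (hm i))]
      exact ⟨Submodule.subset_span ⟨t, ht, rfl⟩, hc ▸ monomial_smul_mem hsmul t (hm i)⟩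
    · rw [SetLike.mem_coe, projc_of_mem_ne gr (monomial_smul_mem hsmul t (hm i)) hc]
      exact Submodule.zero_mem _
  have hbot : ∀ (i : ι) (c : Fin n → ℤ),
      ¬ ((∀ j, s i j ≤ c j) ∧ (∀ j, j ∉ Z i → c j = s i j)) →
      stanleySpace K (m i) (Z i) ⊓ gr c = ⊥ := by
    intro i c hna
    rw [eq_bot_iff]
    rintro x ⟨hx1, hx2⟩
    have hxe : projc gr c x = x := projc_of_mem_same gr hx2
    have hmap0 : Submodule.map (projc gr c) (stanleySpace K (m i) (Z i)) ≤ ⊥ := by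
      rw [stanleySpace, Submodule.map_span, Submodule.span_le]
      rintro y ⟨y', ⟨t, ht, rfl⟩, rfl⟩
      have hne : (s i + fun j => ((t j : ℕ) : ℤ)) ≠ c := fun h =>
        hna ((hAdm i c).mpr ⟨t, ht, h⟩)
      rw [SetLike.mem_coe, projc_of_mem_ne gr (monomial_smul_mem hsmul t (hm i)) hne]
      exact Submodule.zero_mem _
    have hx0 := hmap0 ⟨x, hx1, hxe⟩
    simpa using hx0
  have hind : iSupIndep fun i => stanleySpace K (m i) (Z i) := by
    rw [iSupIndep_def]
    intro i
    rw [Submodule.disjoint_def]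
    intro x hx1 hx2
    refine eq_zero_of_projc gr x fun c => ?_
    have hpx1 : projc gr c x ∈ stanleySpace K (m i) (Z i) ⊓ gr c :=
      hmaple i c ⟨x, hx1, rfl⟩
    have hpx2 : projc gr c x ∈
        ⨆ j, ⨆ _ : j ≠ i, (stanleySpace K (m j) (Z j) ⊓ gr c) := by
      have h1 : projc gr c x ∈ Submodule.map (projc gr c)
          (⨆ j, ⨆ _ : j ≠ i, stanleySpace K (m j) (Z j)) := ⟨x, hx2, rfl⟩
      rw [Submodule.map_iSup] at h1
      simp_rw [Submodule.map_iSup] at h1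
      exact (iSup_mono fun j => iSup_mono fun _ => hmaple j c) h1
    by_cases hadm : (∀ j, s i j ≤ c j) ∧ (∀ j, j ∉ Z i → c j = s i j)
    · have hsup : (⨆ j, ⨆ _ : j ≠ i, (stanleySpace K (m j) (Z j) ⊓ gr c))
          = (⊥ : Submodule K M) := by
        refine le_bot_iff.mp (iSup_le fun j => iSup_le fun hji => ?_)
        rw [hbot j c fun h => hji (huniq c j i h hadm)]
      rw [hsup] at hpx2
      simpa using hpx2
    · rw [hbot i c hadm] at hpx1
      simpa using hpx1
  have htop : (⨆ i, stanleySpace K (m i) (Z i)) = ⊤ := by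
    rw [eq_top_iff, ← (DirectSum.Decomposition.isInternal gr).submodule_iSup_eq_top]
    refine iSup_le fun c => ?_
    by_cases hc : gr c = ⊥
    · rw [hc]; exact bot_le
    · obtain ⟨i, hadm⟩ := hex c hc
      obtain ⟨t, ht, htc⟩ := (hAdm i c).mp hadm
      have he1 : (MvPolynomial.monomial t (1:K)) • m i ∈ stanleySpace K (m i) (Z i) :=
        Submodule.subset_span ⟨t, ht, rfl⟩
      have he2 : (MvPolynomial.monomial t (1:K)) • m i ∈ gr c :=
        htc ▸ monomial_smul_mem hsmul t (hm i)
      intro x hx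
      obtain ⟨k, rfl⟩ := hmult c _ he2 (hgen0 i t ht) x hx
      exact le_iSup (fun i => stanleySpace K (m i) (Z i)) i
        (Submodule.smul_mem _ k he1)
  refine ⟨⟨hm, hannm, hind, htop⟩, fun i c => ?_⟩
  by_cases hadm : (∀ j, s i j ≤ c j) ∧ (∀ j, j ∉ Z i → c j = s i j)
  · rw [if_pos hadm]
    obtain ⟨t, ht, htc⟩ := (hAdm i c).mp hadm
    have he1 : (MvPolynomial.monomial t (1:K)) • m i ∈ stanleySpace K (m i) (Z i) :=
      Submodule.subset_span ⟨t, ht, rfl⟩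
    have he2 : (MvPolynomial.monomial t (1:K)) • m i ∈ gr c :=
      htc ▸ monomial_smul_mem hsmul t (hm i)
    have hne : stanleySpace K (m i) (Z i) ⊓ gr c ≠ ⊥ := by
      intro h
      refine hgen0 i t ht ?_
      have hmem : (MvPolynomial.monomial t (1:K)) • m i ∈
          stanleySpace K (m i) (Z i) ⊓ gr c := ⟨he1, he2⟩
      rw [h] at hmem; simpa using hmem
    have h1 : (1 : Cardinal) ≤ Module.rank K ↥(stanleySpace K (m i) (Z i) ⊓ gr c) :=
      Cardinal.one_le_iff_ne_zero.mpr fun h => hne (Submodule.rank_eq_zero.mp h)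
    have h2 : Module.rank K ↥(stanleySpace K (m i) (Z i) ⊓ gr c) ≤ 1 :=
      (Submodule.rank_mono inf_le_right).trans (hrank c)
    exact le_antisymm h2 h1
  · rw [if_neg hadm, hbot i c hadm]
    exact rank_bot K M ▸ rfl
end

section
/- Let M be a finitely generated ℤⁿ-graded R-module that is positively g-determined, let m ∈ M_a be homogeneous with a ⪯ g, and let Z be a subset of the variables with Ann(m) ∩ K[Z] = 0 (so mK[Z] is a Stanley space). Define b(a) ∈ ℕⁿ by b(a)_j = a_j if X_j ∉ Z and b(a)_j = g_j if X_j ∈ Z. Then Ann(m) ∩ K[Z_{b(a)}] = 0, where Z_{b(a)} = {X_j : b(a)_j = g_j}. -/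
open MvPolynomial

/-!  Setting: `R = K[X₁,…,Xₙ]` with the `ℤⁿ`-grading `deg Xᵢ = eᵢ`.  A multigraded
`R`-module is a module `M` over `MvPolynomial (Fin n) K` together with a family
`gr : (Fin n → ℤ) → Submodule K M` of `K`-subspaces forming a direct sum
decomposition of `M` (the class `DirectSum.Decomposition gr`) which is compatible
with the `R`-action (`GradedSMul gr`). -/

variable {K : Type*} [Field K] {n : ℕ} {M : Type*} [AddCommGroup M] [Module K M]
  [Module (MvPolynomial (Fin n) K) M] [IsScalarTower K (MvPolynomial (Fin n) K) M]

theorem aux_mon_single_add (j : Fin n) (b : ℕ) (f : Fin n →₀ ℕ) :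
    monomial (Finsupp.single j b + f) (1:K) = X j ^ b * monomial f 1 := by
  rw [X_pow_eq_monomial, MvPolynomial.monomial_mul, one_mul]

theorem aux_pow_mem (gr : (Fin n → ℤ) → Submodule K M) (hsmul : GradedSMul gr) (j : Fin n) :
    ∀ (b : ℕ) (d : Fin n → ℤ) (x : M), x ∈ gr d →
      ((X j : MvPolynomial (Fin n) K) ^ b) • x ∈ gr (d + Pi.single j (b:ℤ)) := by
  intro b
  induction b with
  | zero => intro d x hx; simpa using hx
  | succ b ih =>
    intro d x hx
    have h2 := ih (d + Pi.single j 1) _ (hsmul j d x hx)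
    have hidx : (d + Pi.single j 1) + Pi.single j (b:ℤ) = d + Pi.single j ((b+1 : ℕ):ℤ) := by
      funext l
      by_cases hl : l = j <;> simp [hl, Pi.single_apply] <;> push_cast <;> ring
    rw [hidx] at h2
    have hXp : ((X j : MvPolynomial (Fin n) K) ^ (b+1)) • x
        = ((X j : MvPolynomial (Fin n) K) ^ b) • ((X j : MvPolynomial (Fin n) K) • x) := by
      rw [pow_succ, mul_smul]
    rw [hXp]
    exact h2

theorem aux_mon_mem (gr : (Fin n → ℤ) → Submodule K M) (hsmul : GradedSMul gr) :
    ∀ (u : Fin n →₀ ℕ) (d : Fin n → ℤ) (x : M), x ∈ gr d →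
      (monomial u (1:K)) • x ∈ gr (d + fun l => ((u l : ℕ) : ℤ)) := by
  intro u
  induction u using Finsupp.induction with
  | zero =>
    intro d x hx
    have : (fun l => (((0 : Fin n →₀ ℕ) l : ℕ) : ℤ)) = (0 : Fin n → ℤ) := by
      funext l; simp
    rw [this]
    simpa using hx
  | single_add j b f hjf hb ih =>
    intro d x hx
    have h1 := ih d x hx
    have h2 := aux_pow_mem gr hsmul j b _ _ h1
    have hidx : (d + fun l => ((f l : ℕ) : ℤ)) + Pi.single j (b:ℤ)
        = d + fun l => (((Finsupp.single j b + f) l : ℕ) : ℤ) := by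
      funext l
      by_cases hl : l = j
      · subst hl
        have : f l = 0 := Finsupp.notMem_support_iff.mp hjf
        simp [Finsupp.add_apply, Finsupp.single_apply, this]
      · simp [Finsupp.add_apply, Finsupp.single_apply, Pi.single_apply, hl, Ne.symm hl]
    rw [hidx] at h2
    rw [aux_mon_single_add, mul_smul]
    exact h2

theorem aux_pow_cancel (gr : (Fin n → ℤ) → Submodule K M) (hsmul : GradedSMul gr)
    (g : Fin n → ℤ) (hM : PosDetermined gr g) (j : Fin n) :
    ∀ (b : ℕ) (d : Fin n → ℤ) (x : M), x ∈ gr d → g j ≤ d j →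
      ((X j : MvPolynomial (Fin n) K) ^ b) • x = 0 → x = 0 := by
  intro b
  induction b with
  | zero => intro d x _ _ h; simpa using h
  | succ b ih =>
    intro d x hx hle h
    have hXx : (X j : MvPolynomial (Fin n) K) • x = 0 := by
      refine ih (d + Pi.single j 1) _ (hsmul j d x hx) ?_ ?_
      · simp only [Pi.add_apply, Pi.single_eq_same]
        omega
      · rw [← mul_smul, ← pow_succ]
        exact h
    exact (hM.2 j d hle).1 x hx hXx

theorem aux_mon_cancel (gr : (Fin n → ℤ) → Submodule K M) (hsmul : GradedSMul gr)
    (g : Fin n → ℤ) (hM : PosDetermined gr g) :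
    ∀ (v : Fin n →₀ ℕ) (d : Fin n → ℤ) (x : M), x ∈ gr d →
      (∀ j ∈ v.support, g j ≤ d j) → (monomial v (1:K)) • x = 0 → x = 0 := by
  intro v
  induction v using Finsupp.induction with
  | zero => intro d x _ _ h; simpa using h
  | single_add j b f hjf hb ih =>
    intro d x hx hs h
    have hfj : f j = 0 := Finsupp.notMem_support_iff.mp hjf
    have hjmem : j ∈ (Finsupp.single j b + f).support := by
      rw [Finsupp.mem_support_iff, Finsupp.add_apply, Finsupp.single_eq_same, hfj]
      simpa using hb
    have hy := aux_mon_mem gr hsmul f d x hx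
    have hcanc : (monomial f (1:K)) • x = 0 := by
      refine aux_pow_cancel gr hsmul g hM j b _ _ hy ?_ ?_
      · simp only [Pi.add_apply, hfj]
        have := hs j hjmem
        simpa using this
      · rw [← mul_smul, ← aux_mon_single_add]
        exact h
    refine ih d x hx ?_ hcanc
    intro l hl
    refine hs l ?_
    rw [Finsupp.mem_support_iff] at hl ⊢
    have hlj : j ≠ l := fun e => hjf (Finsupp.mem_support_iff.mpr (e ▸ hl))
    rw [Finsupp.add_apply, Finsupp.single_apply, if_neg hlj, zero_add]
    exact hl

theorem aux_component (gr : (Fin n → ℤ) → Submodule K M) [DirectSum.Decomposition gr]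
    (hsmul : GradedSMul gr) (a : Fin n → ℤ) (m : M) (hmem : m ∈ gr a)
    (q : MvPolynomial (Fin n) K) (hqm : q • m = 0) (u : Fin n →₀ ℕ) :
    (monomial u (coeff u q)) • m = 0 := by
  by_cases hu : u ∈ q.support
  · have hterm : ∀ v : Fin n →₀ ℕ,
        (monomial v (coeff v q)) • m ∈ gr (a + fun l => ((v l : ℕ) : ℤ)) := by
      intro v
      have h1 := aux_mon_mem gr hsmul v a m hmem
      have heq : (monomial v (coeff v q)) • m = coeff v q • ((monomial v (1:K)) • m) := by
        rw [← smul_assoc]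
        congr 1
        rw [MvPolynomial.smul_monomial, smul_eq_mul, mul_one]
      rw [heq]
      exact Submodule.smul_mem _ _ h1
    have hqsum : q • m = ∑ v ∈ q.support, (monomial v (coeff v q)) • m := by
      conv_lhs => rw [q.as_sum]
      rw [Finset.sum_smul]
    have hdec : (0 : DirectSum (Fin n → ℤ) fun i => ↥(gr i))
        = ∑ v ∈ q.support, DirectSum.decompose gr ((monomial v (coeff v q)) • m) := by
      rw [← DirectSum.decompose_sum, ← hqsum, hqm, DirectSum.decompose_zero]
    set i₀ : Fin n → ℤ := a + fun l => ((u l : ℕ) : ℤ) with hi₀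
    have happ : (0 : gr i₀)
        = ∑ v ∈ q.support, DirectSum.decompose gr ((monomial v (coeff v q)) • m) i₀ := by
      have h0 := congrArg (fun z => z i₀) hdec
      simp only [DirectSum.zero_apply] at h0
      exact h0.trans (DFinsupp.finset_sum_apply _ _ _)
    rw [Finset.sum_eq_single_of_mem u hu ?_] at happ
    · have hco := congrArg (Subtype.val) happ
      rw [DirectSum.decompose_of_mem_same gr (hterm u)] at hco
      exact hco.symm
    · intro v hv hvu
      refine Subtype.ext ?_
      refine DirectSum.decompose_of_mem_ne gr (hterm v) ?_
      intro hcontra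
      apply hvu
      ext l
      rw [hi₀] at hcontra
      have h1 := congrFun hcontra l
      simp only [Pi.add_apply] at h1
      have h2 := add_left_cancel h1
      exact_mod_cast h2
  · rw [MvPolynomial.notMem_support_iff.mp hu]
    simp

/-- If `M` is a finitely generated multigraded `R`-module, positively
`g`-determined, `m ∈ M_a` with `a ⪯ g`, and `mK[Z]` is a Stanley space
(`Ann(m) ∩ K[Z] = 0`), then with `b(a)_j = g_j` for `X_j ∈ Z` and `b(a)_j = a_j`
otherwise, one also has `Ann(m) ∩ K[Z_{b(a)}] = 0`, where
`Z_{b(a)} = {j : b(a)_j = g_j}`. -/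
theorem ann_inter_enlarged_subalgebra_eq_bot
    (gr : (Fin n → ℤ) → Submodule K M) [DirectSum.Decomposition gr]
    (hsmul : GradedSMul gr) [Module.Finite (MvPolynomial (Fin n) K) M]
    (g : Fin n → ℤ) (hg : (0 : Fin n → ℤ) ≤ g)
    (hM : PosDetermined gr g)
    (a : Fin n → ℤ) (ha : (0 : Fin n → ℤ) ≤ a) (hag : a ≤ g)
    (m : M) (hmem : m ∈ gr a) (Z : Finset (Fin n))
    (hann : ∀ q ∈ MvPolynomial.supported K (↑Z : Set (Fin n)), q • m = 0 → q = 0) :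
    ∀ q ∈ MvPolynomial.supported K
        (↑(Finset.univ.filter fun j => (if j ∈ Z then g j else a j) = g j) : Set (Fin n)),
      q • m = 0 → q = 0 := by
  classical
  intro q hq hqm
  rw [MvPolynomial.mem_supported] at hq
  rw [MvPolynomial.eq_zero_iff]
  intro u
  by_contra hc
  have hu : u ∈ q.support := MvPolynomial.mem_support_iff.mpr hc
  set u₁ : Fin n →₀ ℕ := u.filter (fun j => j ∈ Z) with hu₁
  set u₂ : Fin n →₀ ℕ := u.filter (fun j => j ∉ Z) with hu₂
  have hsplit : u₂ + u₁ = u := by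
    ext l
    by_cases hl : l ∈ Z <;>
      simp [hu₁, hu₂, Finsupp.filter_apply, Finsupp.add_apply, hl]
  have hmono : (monomial u (coeff u q)) • m = 0 :=
    aux_component gr hsmul a m hmem q hqm u
  have hmul : (monomial u₂ (1:K)) • ((monomial u₁ (coeff u q)) • m) = 0 := by
    rw [← mul_smul, MvPolynomial.monomial_mul, one_mul, hsplit]
    exact hmono
  have hy : (monomial u₁ (coeff u q)) • m ∈ gr (a + fun l => ((u₁ l : ℕ) : ℤ)) := by
    have h1 := aux_mon_mem gr hsmul u₁ a m hmem
    have heq : (monomial u₁ (coeff u q)) • m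
        = coeff u q • ((monomial u₁ (1:K)) • m) := by
      rw [← smul_assoc]
      congr 1
      rw [MvPolynomial.smul_monomial, smul_eq_mul, mul_one]
    rw [heq]
    exact Submodule.smul_mem _ _ h1
  have hbound : ∀ j ∈ u₂.support, g j ≤ (a + fun l => ((u₁ l : ℕ) : ℤ)) j := by
    intro j hj
    rw [Finsupp.mem_support_iff, hu₂, Finsupp.filter_apply] at hj
    by_cases hjZ : j ∈ Z
    · simp [hjZ] at hj
    · have huj : u j ≠ 0 := by simpa [hjZ] using hj
      have hjvars : j ∈ q.vars := by
        rw [MvPolynomial.mem_vars]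
        exact ⟨u, hu, Finsupp.mem_support_iff.mpr huj⟩
      have hmem' := hq (Finset.mem_coe.mpr hjvars)
      simp only [Finset.coe_filter, Set.mem_setOf_eq, Finset.mem_univ, true_and] at hmem'
      have hag' : a j = g j := by simpa [hjZ] using hmem'
      have hu₁j : u₁ j = 0 := by simp [hu₁, Finsupp.filter_apply, hjZ]
      simp [Pi.add_apply, hu₁j, hag']
  have hzero : (monomial u₁ (coeff u q)) • m = 0 :=
    aux_mon_cancel gr hsmul g hM u₂ _ _ hy hbound hmul
  have hsupp : (monomial u₁ (coeff u q)) ∈ MvPolynomial.supported K (↑Z : Set (Fin n)) := by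
    rw [MvPolynomial.mem_supported, MvPolynomial.vars_monomial hc]
    intro j hj
    rw [Finset.mem_coe, Finsupp.mem_support_iff, hu₁, Finsupp.filter_apply] at hj
    by_cases hjZ : j ∈ Z
    · exact hjZ
    · simp [hjZ] at hj
  have hfin := hann _ hsupp hzero
  exact hc (by simpa using (MvPolynomial.monomial_eq_zero).mp hfin)
end
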